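/- arXiv:2502.05511 — 3 statements merged into one kernel-verified Lean document; each statement's English description precedes it below -/
import Mathlib

section
/- Every dominating distribution algorithm is 4-competitive against the optimal online policy: for every dominating distribution algorithm A_dom, every online paging policy B started from the same initial cache, and every horizon T, E[cost(A_dom, T)] ≤ 4 · E[cost(B, T)]. -/
open Finset

/-! ## The Markov paging model

Pages are `Fin n`.  Requests are drawn from a time-homogeneous Markov chain with
row-stochastic transition matrix `M` and a fixed initial distribution `init`.
An online paging policy is given by its (randomized) eviction rule: on a cache miss,
`pol hist cache p` is the probability of evicting page `p`, where `hist` is the list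
of requests seen so far (most recent first, the current — missed — request at the head)
and `cache` is the current cache. -/

/-- A (randomized) online paging policy: given the request history (most recent first,
the current request at the head) and the current cache, the probability of evicting
each page. -/
abbrev Policy (n : ℕ) := List (Fin n) → Finset (Fin n) → Fin n → ℝ

/-- `M` is a row-stochastic transition matrix. -/
def IsStochastic {n : ℕ} (M : Fin n → Fin n → ℝ) : Prop :=
  ∀ i, (∀ j, 0 ≤ M i j) ∧ (∑ j, M i j) = 1

/-- `μ` is a probability distribution on the pages. -/
def IsDist {n : ℕ} (μ : Fin n → ℝ) : Prop :=
  (∀ i, 0 ≤ μ i) ∧ (∑ i, μ i) = 1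

/-- Validity of a policy for cache size `k`: on any (size-`k`) cache, the eviction rule
is a probability distribution supported on the cache. -/
def IsPolicy {n : ℕ} (k : ℕ) (pol : Policy n) : Prop :=
  ∀ (hist : List (Fin n)) (cache : Finset (Fin n)), cache.card = k →
    (∀ p, 0 ≤ pol hist cache p) ∧ (∀ p, p ∉ cache → pol hist cache p = 0) ∧
      (∑ p ∈ cache, pol hist cache p) = 1

/-- Expected number of misses of policy `pol` on the next `T` requests, where the next
request is drawn from `dist`, the history so far is `hist` and the current cache is
`cache`.  On a hit the cache is unchanged; on a miss the policy pays `1`, evicts a page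
`p` with probability `pol (x :: hist) cache p` and brings the requested page in. -/
noncomputable def runAux {n : ℕ} (M : Fin n → Fin n → ℝ) (pol : Policy n) :
    ℕ → (Fin n → ℝ) → List (Fin n) → Finset (Fin n) → ℝ
  | 0, _, _, _ => 0
  | T + 1, dist, hist, cache =>
      ∑ x : Fin n, dist x *
        (if x ∈ cache then runAux M pol T (M x) (x :: hist) cache
         else 1 + ∑ p ∈ cache, pol (x :: hist) cache p *
              runAux M pol T (M x) (x :: hist) (insert x (cache.erase p)))

/-- `E[cost(pol, T)]`: the expected number of cache misses of policy `pol` during the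
first `T` requests of the Markov chain `(M, init)`, starting from cache `cache`. -/
noncomputable def expCost {n : ℕ} (M : Fin n → Fin n → ℝ) (init : Fin n → ℝ)
    (pol : Policy n) (cache : Finset (Fin n)) (T : ℕ) : ℝ :=
  runAux M pol T init [] cache

/-- Probability that, within the next `T` steps of the chain currently at `s`, page `p`
is requested strictly before page `q` (a request to `q` — in particular `p = q` — stops
the process with failure). -/
noncomputable def alphaAux {n : ℕ} (M : Fin n → Fin n → ℝ) (p q : Fin n) :
    ℕ → Fin n → ℝ
  | 0, _ => 0
  | T + 1, s =>
      ∑ x : Fin n, M s x *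
        (if x = q then 0 else if x = p then 1 else alphaAux M p q T x)

/-- `α(p<q|s)`: the probability that, for the chain started at `s`, the first subsequent
request to `p` occurs strictly before the first subsequent request to `q`; in particular
`α(p<p|s) = 0`. -/
noncomputable def alphaProb {n : ℕ} (M : Fin n → Fin n → ℝ) (p q s : Fin n) : ℝ :=
  ⨆ T : ℕ, alphaAux M p q T s

/-- A dominating distribution algorithm: a valid policy which, at every cache miss
(most recent request `s`, current cache `cache`), evicts a page drawn from a dominating
distribution for `cache` given `s`, i.e. one satisfying
`∑ p ∈ cache, μ p * α(p<q|s) ≤ 1/2` for every `q ∈ cache`. -/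
def IsDomPolicy {n : ℕ} (k : ℕ) (M : Fin n → Fin n → ℝ) (pol : Policy n) : Prop :=
  IsPolicy k pol ∧
    ∀ (s : Fin n) (hist : List (Fin n)) (cache : Finset (Fin n)),
      cache.card = k → s ∉ cache →
        ∀ q ∈ cache, (∑ p ∈ cache, pol (s :: hist) cache p * alphaProb M p q s) ≤ 1 / 2

namespace LPR

variable {n : ℕ} {M : Fin n → Fin n → ℝ}

lemma alphaAux_nonneg (hM : IsStochastic M) (p q : Fin n) :
    ∀ T s, 0 ≤ alphaAux M p q T s := by
  intro T
  induction T with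
  | zero => intro s; simp [alphaAux]
  | succ T ih =>
      intro s
      rw [alphaAux]
      apply Finset.sum_nonneg
      intro x _
      apply mul_nonneg ((hM s).1 x)
      split_ifs with h1 h2
      · exact le_refl 0
      · exact zero_le_one
      · exact ih x

lemma alphaAux_le_one (hM : IsStochastic M) (p q : Fin n) :
    ∀ T s, alphaAux M p q T s ≤ 1 := by
  intro T
  induction T with
  | zero => intro s; simp [alphaAux]
  | succ T ih =>
      intro s
      rw [alphaAux]
      calc (∑ x : Fin n, M s x * (if x = q then 0 else if x = p then 1 else alphaAux M p q T x))
          ≤ ∑ x : Fin n, M s x * 1 := by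
            apply Finset.sum_le_sum
            intro x _
            apply mul_le_mul_of_nonneg_left _ ((hM s).1 x)
            split_ifs with h1 h2
            · exact zero_le_one
            · exact le_refl 1
            · exact ih x
        _ = 1 := by simp [(hM s).2]

lemma alphaAux_mono (hM : IsStochastic M) (p q : Fin n) :
    ∀ T s, alphaAux M p q T s ≤ alphaAux M p q (T + 1) s := by
  intro T
  induction T with
  | zero => intro s; rw [alphaAux]; exact alphaAux_nonneg hM p q 1 s
  | succ T ih =>
      intro s
      rw [alphaAux, alphaAux]
      apply Finset.sum_le_sum
      intro x _
      apply mul_le_mul_of_nonneg_left _ ((hM s).1 x)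
      split_ifs with h1 h2
      · exact le_refl 0
      · exact le_refl 1
      · exact ih x

lemma alphaAux_bdd (hM : IsStochastic M) (p q s : Fin n) :
    BddAbove (Set.range fun T => alphaAux M p q T s) := by
  refine ⟨1, ?_⟩
  rintro y ⟨T, rfl⟩
  exact alphaAux_le_one hM p q T s

lemma alphaProb_nonneg (hM : IsStochastic M) (p q s : Fin n) :
    0 ≤ alphaProb M p q s := by
  have := le_ciSup (alphaAux_bdd hM p q s) 0
  simpa [alphaAux, alphaProb] using this

lemma alphaProb_le_one (hM : IsStochastic M) (p q s : Fin n) :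
    alphaProb M p q s ≤ 1 :=
  ciSup_le fun T => alphaAux_le_one hM p q T s

lemma alphaProb_tendsto (hM : IsStochastic M) (p q s : Fin n) :
    Filter.Tendsto (fun T => alphaAux M p q T s) Filter.atTop (nhds (alphaProb M p q s)) :=
  tendsto_atTop_ciSup (monotone_nat_of_le_succ fun T => alphaAux_mono hM p q T s)
    (alphaAux_bdd hM p q s)

noncomputable def beta (M : Fin n → Fin n → ℝ) (p q x : Fin n) : ℝ :=
  if x = q then 0 else if x = p then 1 else alphaProb M p q x

lemma beta_nonneg (hM : IsStochastic M) (p q x : Fin n) : 0 ≤ beta M p q x := by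
  unfold beta; split_ifs
  · exact le_refl 0
  · exact zero_le_one
  · exact alphaProb_nonneg hM p q x

lemma beta_le_one (hM : IsStochastic M) (p q x : Fin n) : beta M p q x ≤ 1 := by
  unfold beta; split_ifs
  · exact zero_le_one
  · exact le_refl 1
  · exact alphaProb_le_one hM p q x

lemma alphaProb_rec (hM : IsStochastic M) (p q s : Fin n) :
    alphaProb M p q s = ∑ x : Fin n, M s x * beta M p q x := by
  have h1 : Filter.Tendsto (fun T => alphaAux M p q (T + 1) s) Filter.atTop
      (nhds (alphaProb M p q s)) :=
    (alphaProb_tendsto hM p q s).comp (Filter.tendsto_add_atTop_nat 1)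
  have h2 : Filter.Tendsto (fun T => alphaAux M p q (T + 1) s) Filter.atTop
      (nhds (∑ x : Fin n, M s x * beta M p q x)) := by
    have : ∀ T, alphaAux M p q (T + 1) s =
        ∑ x : Fin n, M s x * (if x = q then 0 else if x = p then 1 else alphaAux M p q T x) := by
      intro T; rw [alphaAux]
    simp only [this]
    apply tendsto_finset_sum
    intro x _
    apply Filter.Tendsto.const_mul
    unfold beta
    split_ifs
    · exact tendsto_const_nhds
    · exact tendsto_const_nhds
    · exact alphaProb_tendsto hM p q x
  exact tendsto_nhds_unique h1 h2

end LPR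
namespace LPR

variable {n : ℕ} {M : Fin n → Fin n → ℝ}

/-- The per-request potential. -/
noncomputable def pot (M : Fin n → Fin n → ℝ) (σ : Fin n → Fin n)
    (CA CB : Finset (Fin n)) (x : Fin n) : ℝ :=
  ∑ h ∈ CB \ CA, (2 + 2 * beta M h (σ h) x)

/-- The averaged potential. -/
noncomputable def Phi (M : Fin n → Fin n → ℝ) (σ : Fin n → Fin n)
    (CA CB : Finset (Fin n)) (x : Fin n) : ℝ :=
  ∑ h ∈ CB \ CA, (2 + 2 * alphaProb M h (σ h) x)

lemma pot_nonneg (hM : IsStochastic M) (σ : Fin n → Fin n) (CA CB : Finset (Fin n))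
    (x : Fin n) : 0 ≤ pot M σ CA CB x := by
  apply Finset.sum_nonneg
  intro h _
  have := beta_nonneg hM h (σ h) x
  linarith

lemma sum_mul_pot (hM : IsStochastic M) (σ : Fin n → Fin n) (CA CB : Finset (Fin n))
    (x : Fin n) :
    ∑ y : Fin n, M x y * pot M σ CA CB y = Phi M σ CA CB x := by
  unfold pot Phi
  simp only [Finset.mul_sum]
  rw [Finset.sum_comm]
  apply Finset.sum_congr rfl
  intro h _
  have : ∑ y : Fin n, M x y * (2 + 2 * beta M h (σ h) y)
      = 2 * ∑ y : Fin n, M x y + 2 * ∑ y : Fin n, M x y * beta M h (σ h) y := by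
    rw [Finset.mul_sum, Finset.mul_sum, ← Finset.sum_add_distrib]
    apply Finset.sum_congr rfl
    intro y _; ring
  rw [this, (hM x).2, ← alphaProb_rec hM]
  ring

/-- Surjectivity of the matching, from cardinalities. -/
lemma match_surj {CA CB : Finset (Fin n)} (hcard : CA.card = CB.card)
    {σ : Fin n → Fin n} (hmap : ∀ h ∈ CB \ CA, σ h ∈ CA \ CB)
    (hinj : Set.InjOn σ (CB \ CA : Finset (Fin n))) :
    ∀ a ∈ CA \ CB, ∃ h ∈ CB \ CA, σ h = a := by
  have himg : (CB \ CA).image σ = CA \ CB := by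
    apply Finset.eq_of_subset_of_card_le
    · intro a ha
      obtain ⟨h, hh, rfl⟩ := Finset.mem_image.mp ha
      exact hmap h hh
    · rw [Finset.card_image_of_injOn (fun a ha b hb hab => hinj (by simpa using ha) (by simpa using hb) hab)]
      rw [Finset.card_sdiff_comm hcard.symm]
  intro a ha
  rw [← himg] at ha
  obtain ⟨h, hh, rfl⟩ := Finset.mem_image.mp ha
  exact ⟨h, hh, rfl⟩

end LPR
namespace LPR

variable {n : ℕ} {M : Fin n → Fin n → ℝ}

/-- Sum of potential terms over a finite set of holes. -/
noncomputable def pVal (M : Fin n → Fin n → ℝ) (σ : Fin n → Fin n) (x : Fin n)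
    (S : Finset (Fin n)) : ℝ :=
  ∑ h ∈ S, (2 + 2 * alphaProb M h (σ h) x)

lemma Phi_eq_pVal (σ : Fin n → Fin n) (CA CB : Finset (Fin n)) (x : Fin n) :
    Phi M σ CA CB x = pVal M σ x (CB \ CA) := rfl

lemma pVal_term_ge (hM : IsStochastic M) (σ : Fin n → Fin n) (x h : Fin n) :
    2 ≤ 2 + 2 * alphaProb M h (σ h) x := by
  have := alphaProb_nonneg hM h (σ h) x; linarith

lemma pVal_term_le (hM : IsStochastic M) (σ : Fin n → Fin n) (x h : Fin n) :
    2 + 2 * alphaProb M h (σ h) x ≤ 4 := by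
  have := alphaProb_le_one hM h (σ h) x; linarith

lemma pVal_mono (hM : IsStochastic M) (σ : Fin n → Fin n) (x : Fin n)
    {S S' : Finset (Fin n)} (hsub : S ⊆ S') : pVal M σ x S ≤ pVal M σ x S' := by
  apply Finset.sum_le_sum_of_subset_of_nonneg hsub
  intro h _ _
  have := pVal_term_ge hM σ x h; linarith

lemma pVal_congr {σ σ' : Fin n → Fin n} {x : Fin n} {S : Finset (Fin n)}
    (h : ∀ a ∈ S, σ' a = σ a) : pVal M σ' x S = pVal M σ x S := by
  apply Finset.sum_congr rfl
  intro a ha; rw [h a ha]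

lemma pVal_update_of_not_mem {σ : Fin n → Fin n} {x a v : Fin n} {S : Finset (Fin n)}
    (ha : a ∉ S) : pVal M (Function.update σ a v) x S = pVal M σ x S := by
  apply pVal_congr
  intro b hb
  have hba : b ≠ a := by rintro rfl; exact ha hb
  exact Function.update_of_ne hba v σ

lemma pVal_insert {σ : Fin n → Fin n} {x : Fin n} {S : Finset (Fin n)} {a : Fin n} (ha : a ∉ S) :
    pVal M σ x (insert a S) = (2 + 2 * alphaProb M a (σ a) x) + pVal M σ x S := by
  unfold pVal; rw [Finset.sum_insert ha]

lemma pVal_erase {σ : Fin n → Fin n} {x a : Fin n} {S : Finset (Fin n)} (ha : a ∈ S) :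
    pVal M σ x (S.erase a) = pVal M σ x S - (2 + 2 * alphaProb M a (σ a) x) := by
  unfold pVal; rw [Finset.sum_erase_eq_sub ha]

/-- Injectivity of an updated matching. -/
lemma injOn_update_of (σ : Fin n → Fin n) (a v : Fin n) (S : Set (Fin n))
    (hinj : Set.InjOn σ (S \ {a}))
    (hv : ∀ h ∈ S, h ≠ a → σ h ≠ v) :
    Set.InjOn (Function.update σ a v) S := by
  intro h1 h1m h2 h2m heq
  by_cases e1 : h1 = a
  · by_cases e2 : h2 = a
    · rw [e1, e2]
    · subst e1
      rw [Function.update_self, Function.update_of_ne e2] at heq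
      exact absurd heq.symm (hv h2 h2m e2)
  · by_cases e2 : h2 = a
    · subst e2
      rw [Function.update_of_ne e1, Function.update_self] at heq
      exact absurd heq (hv h1 h1m e1)
    · rw [Function.update_of_ne e1, Function.update_of_ne e2] at heq
      exact hinj ⟨h1m, e1⟩ ⟨h2m, e2⟩ heq

lemma card_swap {C : Finset (Fin n)} {x p : Fin n} (hp : p ∈ C) (hx : x ∉ C) :
    (insert x (C.erase p)).card = C.card := by
  rw [Finset.card_insert_of_notMem (fun hmem => hx (Finset.mem_of_mem_erase hmem)),
    Finset.card_erase_of_mem hp]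
  have : 1 ≤ C.card := Finset.card_pos.mpr ⟨p, hp⟩
  omega

lemma beta_eq_alpha {p q x : Fin n} (hq : x ≠ q) (hp : x ≠ p) :
    beta M p q x = alphaProb M p q x := by
  unfold beta; rw [if_neg hq, if_neg hp]

lemma beta_eq_one {p q x : Fin n} (hq : x ≠ q) (hp : x = p) :
    beta M p q x = 1 := by
  unfold beta; rw [if_neg hq, if_pos hp]

lemma beta_eq_zero {p q x : Fin n} (hq : x = q) : beta M p q x = 0 := by
  unfold beta; rw [if_pos hq]

end LPR
namespace LPR

variable {n : ℕ} {M : Fin n → Fin n → ℝ}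

/-- The inductive statement. -/
def KeyIH (M : Fin n → Fin n → ℝ) (k : ℕ) (A B : Policy n) (T : ℕ) : Prop :=
  ∀ (dist : Fin n → ℝ), (∀ x, 0 ≤ dist x) →
    ∀ CA CB : Finset (Fin n), CA.card = k → CB.card = k →
      ∀ σ : Fin n → Fin n, (∀ h ∈ CB \ CA, σ h ∈ CA \ CB) →
        Set.InjOn σ ↑(CB \ CA) →
          ∀ histA histB : List (Fin n),
            runAux M A T dist histA CA ≤
              4 * runAux M B T dist histB CB + ∑ x : Fin n, dist x * pot M σ CA CB x

section Cases

variable {k : ℕ} {A B : Policy n} {T : ℕ} {CA CB : Finset (Fin n)}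
  {σ : Fin n → Fin n} {x : Fin n} {histA histB : List (Fin n)}

lemma case_hit_hit (hM : IsStochastic M) (ih : KeyIH M k A B T)
    (hCA : CA.card = k) (hCB : CB.card = k)
    (hmap : ∀ h ∈ CB \ CA, σ h ∈ CA \ CB) (hinj : Set.InjOn σ ↑(CB \ CA))
    (hxA : x ∈ CA) (hxB : x ∈ CB) :
    runAux M A T (M x) (x :: histA) CA ≤
      4 * runAux M B T (M x) (x :: histB) CB + pot M σ CA CB x := by
  have h := ih (M x) (fun y => (hM x).1 y) CA CB hCA hCB σ hmap hinj (x :: histA) (x :: histB)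
  rw [sum_mul_pot hM] at h
  have hpp : Phi M σ CA CB x = pot M σ CA CB x := by
    unfold Phi pot
    apply Finset.sum_congr rfl
    intro h hh
    rw [beta_eq_alpha]
    · intro e
      exact (Finset.mem_sdiff.mp (hmap h hh)).2 (e ▸ hxB)
    · intro e
      exact (Finset.mem_sdiff.mp hh).2 (e ▸ hxA)
  linarith

lemma case_hit_miss (hM : IsStochastic M) (ih : KeyIH M k A B T)
    (hB : IsPolicy k B)
    (hCA : CA.card = k) (hCB : CB.card = k)
    (hmap : ∀ h ∈ CB \ CA, σ h ∈ CA \ CB) (hinj : Set.InjOn σ ↑(CB \ CA))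
    (hxA : x ∈ CA) (hxB : x ∉ CB) :
    runAux M A T (M x) (x :: histA) CA ≤
      4 * (1 + ∑ q ∈ CB, B (x :: histB) CB q *
        runAux M B T (M x) (x :: histB) (insert x (CB.erase q))) + pot M σ CA CB x := by
  classical
  have hxH : x ∈ CA \ CB := Finset.mem_sdiff.mpr ⟨hxA, hxB⟩
  obtain ⟨h₀, hh₀, hσh₀⟩ := match_surj (hCA.trans hCB.symm) hmap hinj x hxH
  obtain ⟨hb0, hbsup, hbsum⟩ := hB (x :: histB) CB hCB
  set S : ℝ := pVal M σ x ((CB \ CA).erase h₀) with hS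
  -- the potential at x
  have pot_eq : pot M σ CA CB x = S + 2 := by
    unfold pot
    rw [← Finset.sum_erase_add _ _ hh₀]
    have e0 : beta M h₀ (σ h₀) x = 0 := beta_eq_zero hσh₀.symm
    have e1 : ∀ h ∈ (CB \ CA).erase h₀,
        (2 + 2 * beta M h (σ h) x) = (2 + 2 * alphaProb M h (σ h) x) := by
      intro h hh
      obtain ⟨hne, hhH⟩ := Finset.mem_erase.mp hh
      rw [beta_eq_alpha]
      · intro e
        exact hne (hinj (Finset.mem_coe.mpr hhH) (Finset.mem_coe.mpr hh₀) (e ▸ hσh₀).symm)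
      · intro e
        exact hxB (e ▸ (Finset.mem_sdiff.mp hhH).1)
    rw [Finset.sum_congr rfl e1, e0, hS]
    unfold pVal
    ring
  -- per-eviction claim for B
  have claim : ∀ q' ∈ CB,
      runAux M A T (M x) (x :: histA) CA ≤
        4 * runAux M B T (M x) (x :: histB) (insert x (CB.erase q')) + (S + 4) := by
    intro q' hq'B
    have hCB' : (insert x (CB.erase q')).card = k := by rw [card_swap hq'B hxB, hCB]
    by_cases hq'A : q' ∈ CA
    · -- B evicts a page also in A's cache: a new "anti-hole" q' appears
      have hid : (insert x (CB.erase q')) \ CA = CB \ CA := by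
        ext a
        simp only [Finset.mem_sdiff, Finset.mem_insert, Finset.mem_erase]
        constructor
        · rintro ⟨(rfl | ⟨hne, hmem⟩), hnA⟩
          · exact absurd hxA hnA
          · exact ⟨hmem, hnA⟩
        · rintro ⟨hmem, hnA⟩
          exact ⟨Or.inr ⟨fun e => hnA (e ▸ hq'A), hmem⟩, hnA⟩
      set σ' : Fin n → Fin n := Function.update σ h₀ q' with hσ'
      have hmap' : ∀ h ∈ (insert x (CB.erase q')) \ CA, σ' h ∈ CA \ (insert x (CB.erase q')) := by
        rw [hid]
        intro h hh
        by_cases e : h = h₀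
        · subst e
          rw [hσ', Function.update_self]
          refine Finset.mem_sdiff.mpr ⟨hq'A, ?_⟩
          intro hmem
          rcases Finset.mem_insert.mp hmem with e | e
          · exact hxB (e ▸ hq'B)
          · exact (Finset.notMem_erase q' CB) e
        · rw [hσ', Function.update_of_ne e]
          obtain ⟨hA', hB'⟩ := Finset.mem_sdiff.mp (hmap h hh)
          refine Finset.mem_sdiff.mpr ⟨hA', ?_⟩
          intro hmem
          rcases Finset.mem_insert.mp hmem with e2 | e2
          · exact e (hinj (Finset.mem_coe.mpr hh) (Finset.mem_coe.mpr hh₀) (by rw [e2, hσh₀]))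
          · exact hB' (Finset.mem_of_mem_erase e2)
      have hinj' : Set.InjOn σ' ↑((insert x (CB.erase q')) \ CA) := by
        rw [hid, hσ']
        apply injOn_update_of
        · exact hinj.mono Set.diff_subset
        · intro h hh hne e
          have hhH := Finset.mem_coe.mp hh
          exact (Finset.mem_sdiff.mp (hmap h hhH)).2 (by rw [e]; exact hq'B)
      have h := ih (M x) (fun y => (hM x).1 y) CA (insert x (CB.erase q')) hCA hCB'
        σ' hmap' hinj' (x :: histA) (x :: histB)
      rw [sum_mul_pot hM] at h
      have hPhi : Phi M σ' CA (insert x (CB.erase q')) x ≤ S + 4 := by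
        rw [Phi_eq_pVal, hid]
        have e2 : pVal M σ' x ((CB \ CA).erase h₀) = S := by
          rw [hσ', pVal_update_of_not_mem (Finset.notMem_erase h₀ _), hS]
        have e3 := pVal_erase (M := M) (σ := σ') (x := x) hh₀
        have e4 : σ' h₀ = q' := by rw [hσ']; exact Function.update_self h₀ q' σ
        have e5 := alphaProb_le_one hM h₀ q' x
        rw [e2] at e3
        rw [e4] at e3
        linarith
      linarith
    · -- B evicts a hole q'
      have hq'H : q' ∈ CB \ CA := Finset.mem_sdiff.mpr ⟨hq'B, hq'A⟩
      have hid : (insert x (CB.erase q')) \ CA = (CB \ CA).erase q' := by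
        ext a
        simp only [Finset.mem_sdiff, Finset.mem_insert, Finset.mem_erase]
        constructor
        · rintro ⟨(rfl | ⟨hne, hmem⟩), hnA⟩
          · exact absurd hxA hnA
          · exact ⟨hne, hmem, hnA⟩
        · rintro ⟨hne, hmem, hnA⟩
          exact ⟨Or.inr ⟨hne, hmem⟩, hnA⟩
      by_cases e : q' = h₀
      · -- the hole matched to x is evicted
        subst e
        have hmap' : ∀ h ∈ (insert x (CB.erase q')) \ CA, σ h ∈ CA \ (insert x (CB.erase q')) := by
          rw [hid]
          intro h hh
          obtain ⟨hne, hhH⟩ := Finset.mem_erase.mp hh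
          obtain ⟨hA', hB'⟩ := Finset.mem_sdiff.mp (hmap h hhH)
          refine Finset.mem_sdiff.mpr ⟨hA', ?_⟩
          intro hmem
          rcases Finset.mem_insert.mp hmem with e2 | e2
          · exact hne (hinj (Finset.mem_coe.mpr hhH) (Finset.mem_coe.mpr hh₀) (by rw [e2, hσh₀]))
          · exact hB' (Finset.mem_of_mem_erase e2)
        have hinj' : Set.InjOn σ ↑((insert x (CB.erase q')) \ CA) := by
          rw [hid]
          exact hinj.mono (by exact_mod_cast Finset.coe_subset.mpr (Finset.erase_subset _ _))
        have h := ih (M x) (fun y => (hM x).1 y) CA (insert x (CB.erase q')) hCA hCB'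
          σ hmap' hinj' (x :: histA) (x :: histB)
        rw [sum_mul_pot hM] at h
        have hPhi : Phi M σ CA (insert x (CB.erase q')) x ≤ S + 4 := by
          rw [Phi_eq_pVal, hid, ← hS]
          linarith
        linarith
      · -- a different hole is evicted; rematch h₀ to σ q'
        set σ' : Fin n → Fin n := Function.update σ h₀ (σ q') with hσ'
        have hmap' : ∀ h ∈ (insert x (CB.erase q')) \ CA, σ' h ∈ CA \ (insert x (CB.erase q')) := by
          rw [hid]
          intro h hh
          obtain ⟨hne, hhH⟩ := Finset.mem_erase.mp hh
          have key : ∀ g ∈ CB \ CA, g ≠ h₀ → σ g ∈ CA \ (insert x (CB.erase q')) := by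
            intro g hgH hgne
            obtain ⟨hA', hB'⟩ := Finset.mem_sdiff.mp (hmap g hgH)
            refine Finset.mem_sdiff.mpr ⟨hA', ?_⟩
            intro hmem
            rcases Finset.mem_insert.mp hmem with e2 | e2
            · exact hgne (hinj (Finset.mem_coe.mpr hgH) (Finset.mem_coe.mpr hh₀) (by rw [e2, hσh₀]))
            · exact hB' (Finset.mem_of_mem_erase e2)
          by_cases e2 : h = h₀
          · subst e2
            rw [hσ', Function.update_self]
            exact key q' hq'H (fun e3 => e (e3))
          · rw [hσ', Function.update_of_ne e2]
            exact key h hhH e2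
        have hinj' : Set.InjOn σ' ↑((insert x (CB.erase q')) \ CA) := by
          rw [hid, hσ']
          apply injOn_update_of
          · exact (hinj.mono (Set.diff_subset.trans
              (by exact_mod_cast Finset.coe_subset.mpr (Finset.erase_subset _ _))))
          · intro h hh hne
            have hh2 := Finset.mem_coe.mp hh
            obtain ⟨hneq', hhH⟩ := Finset.mem_erase.mp hh2
            intro e2
            exact hneq' (hinj (Finset.mem_coe.mpr hhH) (Finset.mem_coe.mpr hq'H) e2)
        have h := ih (M x) (fun y => (hM x).1 y) CA (insert x (CB.erase q')) hCA hCB'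
          σ' hmap' hinj' (x :: histA) (x :: histB)
        rw [sum_mul_pot hM] at h
        have hPhi : Phi M σ' CA (insert x (CB.erase q')) x ≤ S + 4 := by
          rw [Phi_eq_pVal, hid]
          have hh₀e : h₀ ∈ (CB \ CA).erase q' := Finset.mem_erase.mpr ⟨fun e2 => e e2.symm, hh₀⟩
          have e3 := pVal_erase (M := M) (σ := σ') (x := x) hh₀e
          have e4 : σ' h₀ = σ q' := by rw [hσ']; exact Function.update_self h₀ (σ q') σ
          have e5 := alphaProb_le_one hM h₀ (σ q') x
          have e6 : pVal M σ' x (((CB \ CA).erase q').erase h₀) ≤ S := by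
            rw [hσ', pVal_update_of_not_mem (Finset.notMem_erase h₀ _), hS]
            apply pVal_mono hM
            intro a ha
            obtain ⟨ha1, ha2⟩ := Finset.mem_erase.mp ha
            obtain ⟨ha3, ha4⟩ := Finset.mem_erase.mp ha2
            exact Finset.mem_erase.mpr ⟨ha1, ha4⟩
          rw [e4] at e3
          linarith
        linarith
  -- combine
  have hstep : runAux M A T (M x) (x :: histA) CA ≤
      ∑ q' ∈ CB, B (x :: histB) CB q' *
        (4 * runAux M B T (M x) (x :: histB) (insert x (CB.erase q')) + (S + 4)) := by
    calc runAux M A T (M x) (x :: histA) CA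
        = (∑ q' ∈ CB, B (x :: histB) CB q') * runAux M A T (M x) (x :: histA) CA := by
          rw [hbsum, one_mul]
      _ = ∑ q' ∈ CB, B (x :: histB) CB q' * runAux M A T (M x) (x :: histA) CA :=
          Finset.sum_mul _ _ _
      _ ≤ _ := Finset.sum_le_sum fun q' hq' =>
          mul_le_mul_of_nonneg_left (claim q' hq') (hb0 q')
  have hexp : ∑ q' ∈ CB, B (x :: histB) CB q' *
      (4 * runAux M B T (M x) (x :: histB) (insert x (CB.erase q')) + (S + 4)) =
      4 * (∑ q' ∈ CB, B (x :: histB) CB q' *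
        runAux M B T (M x) (x :: histB) (insert x (CB.erase q'))) + (S + 4) := by
    have expand : ∀ q' ∈ CB, B (x :: histB) CB q' *
        (4 * runAux M B T (M x) (x :: histB) (insert x (CB.erase q')) + (S + 4)) =
        4 * (B (x :: histB) CB q' * runAux M B T (M x) (x :: histB) (insert x (CB.erase q')))
          + (S + 4) * B (x :: histB) CB q' := by
      intro q' _; ring
    rw [Finset.sum_congr rfl expand, Finset.sum_add_distrib, ← Finset.mul_sum, ← Finset.mul_sum,
      hbsum, mul_one]
  rw [hexp] at hstep
  linarith

lemma case_miss_hit (hM : IsStochastic M) (ih : KeyIH M k A B T)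
    (hA : IsDomPolicy k M A)
    (hCA : CA.card = k) (hCB : CB.card = k)
    (hmap : ∀ h ∈ CB \ CA, σ h ∈ CA \ CB) (hinj : Set.InjOn σ ↑(CB \ CA))
    (hxA : x ∉ CA) (hxB : x ∈ CB) :
    1 + ∑ p ∈ CA, A (x :: histA) CA p *
        runAux M A T (M x) (x :: histA) (insert x (CA.erase p)) ≤
      4 * runAux M B T (M x) (x :: histB) CB + pot M σ CA CB x := by
  classical
  have hxH : x ∈ CB \ CA := Finset.mem_sdiff.mpr ⟨hxB, hxA⟩
  obtain ⟨hd0, hdsup, hdsum⟩ := hA.1 (x :: histA) CA hCA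
  have hσx := hmap x hxH
  obtain ⟨hσxA, hσxB⟩ := Finset.mem_sdiff.mp hσx
  have hdom := hA.2 x histA CA hCA hxA (σ x) hσxA
  set S : ℝ := pVal M σ x ((CB \ CA).erase x) with hS
  have pot_eq : pot M σ CA CB x = S + 4 := by
    unfold pot
    rw [← Finset.sum_erase_add _ _ hxH]
    have e0 : beta M x (σ x) x = 1 :=
      beta_eq_one (fun e => hxA (e ▸ hσxA)) rfl
    have e1 : ∀ h ∈ (CB \ CA).erase x,
        (2 + 2 * beta M h (σ h) x) = (2 + 2 * alphaProb M h (σ h) x) := by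
      intro h hh
      obtain ⟨hne, hhH⟩ := Finset.mem_erase.mp hh
      rw [beta_eq_alpha]
      · intro e
        exact hxA (e ▸ (Finset.mem_sdiff.mp (hmap h hhH)).1)
      · exact fun e => hne e.symm
    rw [Finset.sum_congr rfl e1, e0, hS]
    unfold pVal
    ring
  have claim : ∀ p ∈ CA,
      runAux M A T (M x) (x :: histA) (insert x (CA.erase p)) ≤
        4 * runAux M B T (M x) (x :: histB) CB +
          (S + 2 + 2 * alphaProb M p (σ x) x) := by
    intro p hpA
    have hCA' : (insert x (CA.erase p)).card = k := by rw [card_swap hpA hxA, hCA]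
    have hpx : p ≠ x := fun e => hxA (e ▸ hpA)
    by_cases hpB : p ∈ CB
    · -- A evicts a page in B's cache: the hole moves from x to p
      have hid : CB \ (insert x (CA.erase p)) = insert p ((CB \ CA).erase x) := by
        ext a
        by_cases e1 : a = p
        · subst e1
          simp only [Finset.mem_sdiff, Finset.mem_insert, Finset.mem_erase]
          simp [hpB, hpx, hpA]
        · by_cases e2 : a = x
          · subst e2
            simp only [Finset.mem_sdiff, Finset.mem_insert, Finset.mem_erase]
            simp [e1, hxA]
          · simp only [Finset.mem_sdiff, Finset.mem_insert, Finset.mem_erase, e1, e2]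
            tauto
      set σ' : Fin n → Fin n := Function.update σ p (σ x) with hσ'
      have hpe : p ∉ (CB \ CA).erase x := by
        intro hmem
        exact (Finset.mem_sdiff.mp (Finset.mem_of_mem_erase hmem)).2 hpA
      have hmap' : ∀ h ∈ CB \ (insert x (CA.erase p)),
          σ' h ∈ (insert x (CA.erase p)) \ CB := by
        rw [hid]
        intro h hh
        rcases Finset.mem_insert.mp hh with rfl | hh2
        · rw [hσ', Function.update_self]
          refine Finset.mem_sdiff.mpr ⟨?_, hσxB⟩
          apply Finset.mem_insert_of_mem
          refine Finset.mem_erase.mpr ⟨fun e => hσxB (by rw [e]; exact hpB), hσxA⟩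
        · obtain ⟨hne, hhH⟩ := Finset.mem_erase.mp hh2
          have hhp : h ≠ p := fun e => (Finset.mem_sdiff.mp hhH).2 (e ▸ hpA)
          rw [hσ', Function.update_of_ne hhp]
          obtain ⟨hA', hB'⟩ := Finset.mem_sdiff.mp (hmap h hhH)
          refine Finset.mem_sdiff.mpr ⟨?_, hB'⟩
          apply Finset.mem_insert_of_mem
          exact Finset.mem_erase.mpr ⟨fun e => hB' (e ▸ hpB), hA'⟩
      have hinj' : Set.InjOn σ' ↑(CB \ (insert x (CA.erase p))) := by
        rw [hid, hσ']
        apply injOn_update_of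
        · apply hinj.mono
          intro a ha
          obtain ⟨ha1, ha2⟩ := ha
          rcases Finset.mem_insert.mp (Finset.mem_coe.mp ha1) with e | e
          · exact absurd e ha2
          · exact Finset.mem_coe.mpr (Finset.mem_of_mem_erase e)
        · intro h hh hne e
          have hh2 := Finset.mem_coe.mp hh
          rcases Finset.mem_insert.mp hh2 with e2 | e2
          · exact hne e2
          · obtain ⟨hne2, hhH⟩ := Finset.mem_erase.mp e2
            exact hne2 (hinj (Finset.mem_coe.mpr hhH) (Finset.mem_coe.mpr hxH) e)
      have h := ih (M x) (fun y => (hM x).1 y) (insert x (CA.erase p)) CB hCA' hCB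
        σ' hmap' hinj' (x :: histA) (x :: histB)
      rw [sum_mul_pot hM] at h
      have hPhi : Phi M σ' (insert x (CA.erase p)) CB x =
          S + 2 + 2 * alphaProb M p (σ x) x := by
        rw [Phi_eq_pVal, hid, pVal_insert hpe]
        have e4 : σ' p = σ x := by rw [hσ']; exact Function.update_self p (σ x) σ
        rw [e4, hσ', pVal_update_of_not_mem hpe, ← hS]
        ring
      linarith
    · -- A evicts a page outside B's cache: the hole at x disappears
      have hpA' : p ∈ CA \ CB := Finset.mem_sdiff.mpr ⟨hpA, hpB⟩
      have hid : CB \ (insert x (CA.erase p)) = (CB \ CA).erase x := by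
        ext a
        by_cases e1 : a = p
        · subst e1
          simp only [Finset.mem_sdiff, Finset.mem_insert, Finset.mem_erase]
          simp [hpB, hpx]
        · by_cases e2 : a = x
          · subst e2
            simp only [Finset.mem_sdiff, Finset.mem_insert, Finset.mem_erase]
            simp [e1, hxA]
          · simp only [Finset.mem_sdiff, Finset.mem_insert, Finset.mem_erase, e1, e2]
            tauto
      by_cases e : σ x = p
      · -- A evicted exactly the partner of the hole x
        have hmap' : ∀ h ∈ CB \ (insert x (CA.erase p)),
            σ h ∈ (insert x (CA.erase p)) \ CB := by
          rw [hid]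
          intro h hh
          obtain ⟨hne, hhH⟩ := Finset.mem_erase.mp hh
          obtain ⟨hA', hB'⟩ := Finset.mem_sdiff.mp (hmap h hhH)
          refine Finset.mem_sdiff.mpr ⟨?_, hB'⟩
          apply Finset.mem_insert_of_mem
          refine Finset.mem_erase.mpr ⟨?_, hA'⟩
          intro e2
          exact hne (hinj (Finset.mem_coe.mpr hhH) (Finset.mem_coe.mpr hxH) (by rw [e2, e]))
        have hinj' : Set.InjOn σ ↑(CB \ (insert x (CA.erase p))) := by
          rw [hid]
          exact hinj.mono (by exact_mod_cast Finset.coe_subset.mpr (Finset.erase_subset _ _))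
        have h := ih (M x) (fun y => (hM x).1 y) (insert x (CA.erase p)) CB hCA' hCB
          σ hmap' hinj' (x :: histA) (x :: histB)
        rw [sum_mul_pot hM] at h
        have hPhi : Phi M σ (insert x (CA.erase p)) CB x = S := by
          rw [Phi_eq_pVal, hid, ← hS]
        have hα := alphaProb_nonneg hM p (σ x) x
        linarith
      · -- rematch the hole previously matched to p
        obtain ⟨hs, hsH, hσhs⟩ := match_surj (hCA.trans hCB.symm) hmap hinj p hpA'
        have hsx : hs ≠ x := fun e2 => e (by rw [← e2, hσhs])
        have hsHe : hs ∈ (CB \ CA).erase x := Finset.mem_erase.mpr ⟨hsx, hsH⟩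
        set σ' : Fin n → Fin n := Function.update σ hs (σ x) with hσ'
        have hmap' : ∀ h ∈ CB \ (insert x (CA.erase p)),
            σ' h ∈ (insert x (CA.erase p)) \ CB := by
          rw [hid]
          intro h hh
          obtain ⟨hne, hhH⟩ := Finset.mem_erase.mp hh
          by_cases e2 : h = hs
          · subst e2
            rw [hσ', Function.update_self]
            refine Finset.mem_sdiff.mpr ⟨?_, hσxB⟩
            apply Finset.mem_insert_of_mem
            exact Finset.mem_erase.mpr ⟨e, hσxA⟩
          · rw [hσ', Function.update_of_ne e2]
            obtain ⟨hA', hB'⟩ := Finset.mem_sdiff.mp (hmap h hhH)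
            refine Finset.mem_sdiff.mpr ⟨?_, hB'⟩
            apply Finset.mem_insert_of_mem
            refine Finset.mem_erase.mpr ⟨?_, hA'⟩
            intro e3
            exact e2 (hinj (Finset.mem_coe.mpr hhH) (Finset.mem_coe.mpr hsH) (by rw [e3, hσhs]))
        have hinj' : Set.InjOn σ' ↑(CB \ (insert x (CA.erase p))) := by
          rw [hid, hσ']
          apply injOn_update_of
          · exact hinj.mono (Set.diff_subset.trans
              (by exact_mod_cast Finset.coe_subset.mpr (Finset.erase_subset _ _)))
          · intro h hh hne e2
            have hh2 := Finset.mem_coe.mp hh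
            obtain ⟨hne2, hhH⟩ := Finset.mem_erase.mp hh2
            exact hne2 (hinj (Finset.mem_coe.mpr hhH) (Finset.mem_coe.mpr hxH) e2)
        have h := ih (M x) (fun y => (hM x).1 y) (insert x (CA.erase p)) CB hCA' hCB
          σ' hmap' hinj' (x :: histA) (x :: histB)
        rw [sum_mul_pot hM] at h
        have hPhi : Phi M σ' (insert x (CA.erase p)) CB x ≤ S + 2 := by
          rw [Phi_eq_pVal, hid]
          have e3 := pVal_erase (M := M) (σ := σ') (x := x) hsHe
          have e4 : σ' hs = σ x := by rw [hσ']; exact Function.update_self hs (σ x) σ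
          have e5 : pVal M σ' x (((CB \ CA).erase x).erase hs) =
              pVal M σ x (((CB \ CA).erase x).erase hs) := by
            rw [hσ', pVal_update_of_not_mem (Finset.notMem_erase hs _)]
          have e6 := pVal_erase (M := M) (σ := σ) (x := x) hsHe
          rw [e4, e5] at e3
          rw [hσhs] at e6
          have b1 := alphaProb_le_one hM hs (σ x) x
          have b2 := alphaProb_nonneg hM hs p x
          rw [← hS] at e6
          linarith
        have hα := alphaProb_nonneg hM p (σ x) x
        linarith
  -- combine
  have hstep : ∑ p ∈ CA, A (x :: histA) CA p *
      runAux M A T (M x) (x :: histA) (insert x (CA.erase p)) ≤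
      ∑ p ∈ CA, A (x :: histA) CA p *
        (4 * runAux M B T (M x) (x :: histB) CB +
          (S + 2 + 2 * alphaProb M p (σ x) x)) :=
    Finset.sum_le_sum fun p hp => mul_le_mul_of_nonneg_left (claim p hp) (hd0 p)
  have hexp : ∑ p ∈ CA, A (x :: histA) CA p *
      (4 * runAux M B T (M x) (x :: histB) CB +
        (S + 2 + 2 * alphaProb M p (σ x) x)) =
      (4 * runAux M B T (M x) (x :: histB) CB + S + 2) +
        2 * ∑ p ∈ CA, A (x :: histA) CA p * alphaProb M p (σ x) x := by
    have expand : ∀ p ∈ CA, A (x :: histA) CA p *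
        (4 * runAux M B T (M x) (x :: histB) CB +
          (S + 2 + 2 * alphaProb M p (σ x) x)) =
        (4 * runAux M B T (M x) (x :: histB) CB + S + 2) * A (x :: histA) CA p +
          2 * (A (x :: histA) CA p * alphaProb M p (σ x) x) := by
      intro p _; ring
    rw [Finset.sum_congr rfl expand, Finset.sum_add_distrib, ← Finset.mul_sum, ← Finset.mul_sum,
      hdsum, mul_one]
  rw [hexp] at hstep
  linarith


lemma case_miss_miss (hM : IsStochastic M) (ih : KeyIH M k A B T)
    (hA : IsDomPolicy k M A) (hB : IsPolicy k B)
    (hCA : CA.card = k) (hCB : CB.card = k)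
    (hmap : ∀ h ∈ CB \ CA, σ h ∈ CA \ CB) (hinj : Set.InjOn σ ↑(CB \ CA))
    (hxA : x ∉ CA) (hxB : x ∉ CB) :
    1 + ∑ p ∈ CA, A (x :: histA) CA p *
        runAux M A T (M x) (x :: histA) (insert x (CA.erase p)) ≤
      4 * (1 + ∑ q ∈ CB, B (x :: histB) CB q *
        runAux M B T (M x) (x :: histB) (insert x (CB.erase q))) + pot M σ CA CB x := by
  classical
  obtain ⟨hd0, hdsup, hdsum⟩ := hA.1 (x :: histA) CA hCA
  obtain ⟨hb0, hbsup, hbsum⟩ := hB (x :: histB) CB hCB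
  set S : ℝ := pVal M σ x (CB \ CA) with hS
  have pot_eq : pot M σ CA CB x = S := by
    unfold pot
    have e1 : ∀ h ∈ CB \ CA,
        (2 + 2 * beta M h (σ h) x) = (2 + 2 * alphaProb M h (σ h) x) := by
      intro h hh
      rw [beta_eq_alpha]
      · exact fun e => hxA (e ▸ (Finset.mem_sdiff.mp (hmap h hh)).1)
      · exact fun e => hxB (e ▸ (Finset.mem_sdiff.mp hh).1)
    rw [Finset.sum_congr rfl e1, hS]
    rfl
  have claimB : ∀ q' ∈ CB,
      ∑ p ∈ CA, A (x :: histA) CA p *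
        runAux M A T (M x) (x :: histA) (insert x (CA.erase p)) ≤
      4 * runAux M B T (M x) (x :: histB) (insert x (CB.erase q')) + (S + 3) := by
    intro q' hq'B
    have hCB' : (insert x (CB.erase q')).card = k := by rw [card_swap hq'B hxB, hCB]
    have hq'x : q' ≠ x := fun e => hxB (e ▸ hq'B)
    by_cases hq'A : q' ∈ CA
    · -- B's evicted page q' is in A's cache
      have hdom := hA.2 x histA CA hCA hxA q' hq'A
      have claimA : ∀ p ∈ CA,
          runAux M A T (M x) (x :: histA) (insert x (CA.erase p)) ≤
            4 * runAux M B T (M x) (x :: histB) (insert x (CB.erase q')) +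
              (S + 2 + 2 * alphaProb M p q' x) := by
        intro p hpA
        have hCA' : (insert x (CA.erase p)).card = k := by rw [card_swap hpA hxA, hCA]
        have hpx : p ≠ x := fun e => hxA (e ▸ hpA)
        by_cases hpq : p = q'
        · -- both evict the same page
          subst hpq
          have hid : (insert x (CB.erase p)) \ (insert x (CA.erase p)) = CB \ CA := by
            ext a
            by_cases e2 : a = x
            · subst e2; simp [hxB]
            · by_cases e1 : a = p
              · subst e1; simp [hpx, hpA]
              · simp only [Finset.mem_sdiff, Finset.mem_insert, Finset.mem_erase, e1, e2]
                tauto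
          have hmap' : ∀ h ∈ (insert x (CB.erase p)) \ (insert x (CA.erase p)),
              σ h ∈ (insert x (CA.erase p)) \ (insert x (CB.erase p)) := by
            rw [hid]
            intro h hh
            obtain ⟨hA', hB'⟩ := Finset.mem_sdiff.mp (hmap h hh)
            have hne_p : σ h ≠ p := fun e => hB' (e ▸ hq'B)
            have hne_x : σ h ≠ x := fun e => hxA (e ▸ hA')
            refine Finset.mem_sdiff.mpr ⟨Finset.mem_insert_of_mem (Finset.mem_erase.mpr ⟨hne_p, hA'⟩), ?_⟩
            intro hmem
            rcases Finset.mem_insert.mp hmem with e2 | e2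
            · exact hne_x e2
            · exact hB' (Finset.mem_of_mem_erase e2)
          have hinj' : Set.InjOn σ ↑((insert x (CB.erase p)) \ (insert x (CA.erase p))) := by
            rw [hid]; exact hinj
          have h := ih (M x) (fun y => (hM x).1 y) (insert x (CA.erase p))
            (insert x (CB.erase p)) hCA' hCB' σ hmap' hinj' (x :: histA) (x :: histB)
          rw [sum_mul_pot hM] at h
          have hPhi : Phi M σ (insert x (CA.erase p)) (insert x (CB.erase p)) x = S := by
            rw [Phi_eq_pVal, hid]
          have hα := alphaProb_nonneg hM p p x
          linarith
        · by_cases hpB : p ∈ CB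
          · -- a new hole at p, matched to the new anti-hole q'
            have hid : (insert x (CB.erase q')) \ (insert x (CA.erase p)) =
                insert p (CB \ CA) := by
              ext a
              by_cases e2 : a = x
              · subst e2; simp [hxB, Ne.symm hpx]
              · by_cases e1 : a = p
                · subst e1; simp [hpx, hpB, hpq]
                · by_cases e3 : a = q'
                  · subst e3; simp [hq'x, hq'A, Ne.symm hpq]
                  · simp only [Finset.mem_sdiff, Finset.mem_insert, Finset.mem_erase, e1, e2, e3]
                    tauto
            have hpH : p ∉ CB \ CA := fun hmem => (Finset.mem_sdiff.mp hmem).2 hpA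
            set σ' : Fin n → Fin n := Function.update σ p q' with hσ'
            have hmap' : ∀ h ∈ (insert x (CB.erase q')) \ (insert x (CA.erase p)),
                σ' h ∈ (insert x (CA.erase p)) \ (insert x (CB.erase q')) := by
              rw [hid]
              intro h hh
              rcases Finset.mem_insert.mp hh with rfl | hh2
              · rw [hσ', Function.update_self]
                refine Finset.mem_sdiff.mpr ⟨Finset.mem_insert_of_mem
                  (Finset.mem_erase.mpr ⟨Ne.symm hpq, hq'A⟩), ?_⟩
                intro hmem
                rcases Finset.mem_insert.mp hmem with e2 | e2
                · exact hq'x e2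
                · exact (Finset.notMem_erase q' CB) e2
              · obtain ⟨hA', hB'⟩ := Finset.mem_sdiff.mp (hmap h hh2)
                have hhp : h ≠ p := fun e => (Finset.mem_sdiff.mp hh2).2 (e ▸ hpA)
                rw [hσ', Function.update_of_ne hhp]
                have hne_p : σ h ≠ p := fun e => hB' (e ▸ hpB)
                have hne_x : σ h ≠ x := fun e => hxA (e ▸ hA')
                refine Finset.mem_sdiff.mpr ⟨Finset.mem_insert_of_mem
                  (Finset.mem_erase.mpr ⟨hne_p, hA'⟩), ?_⟩
                intro hmem
                rcases Finset.mem_insert.mp hmem with e2 | e2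
                · exact hne_x e2
                · exact hB' (Finset.mem_of_mem_erase e2)
            have hinj' : Set.InjOn σ' ↑((insert x (CB.erase q')) \ (insert x (CA.erase p))) := by
              rw [hid, hσ']
              apply injOn_update_of
              · apply hinj.mono
                intro a ha
                obtain ⟨ha1, ha2⟩ := ha
                rcases Finset.mem_insert.mp (Finset.mem_coe.mp ha1) with e | e
                · exact absurd e ha2
                · exact Finset.mem_coe.mpr e
              · intro h hh hne e
                rcases Finset.mem_insert.mp (Finset.mem_coe.mp hh) with e2 | e2
                · exact hne e2
                · exact (Finset.mem_sdiff.mp (hmap h e2)).2 (by rw [e]; exact hq'B)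
            have h := ih (M x) (fun y => (hM x).1 y) (insert x (CA.erase p))
              (insert x (CB.erase q')) hCA' hCB' σ' hmap' hinj' (x :: histA) (x :: histB)
            rw [sum_mul_pot hM] at h
            have hPhi : Phi M σ' (insert x (CA.erase p)) (insert x (CB.erase q')) x =
                S + 2 + 2 * alphaProb M p q' x := by
              rw [Phi_eq_pVal, hid, pVal_insert hpH]
              have e4 : σ' p = q' := by rw [hσ']; exact Function.update_self p q' σ
              rw [e4, hσ', pVal_update_of_not_mem hpH, ← hS]
              ring
            linarith
          · -- A's evicted page p is an anti-hole; rematch its hole to q'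
            have hpA' : p ∈ CA \ CB := Finset.mem_sdiff.mpr ⟨hpA, hpB⟩
            obtain ⟨hs, hsH, hσhs⟩ := match_surj (hCA.trans hCB.symm) hmap hinj p hpA'
            have hid : (insert x (CB.erase q')) \ (insert x (CA.erase p)) = CB \ CA := by
              ext a
              by_cases e2 : a = x
              · subst e2; simp [hxB]
              · by_cases e1 : a = p
                · subst e1; simp [hpx, hpB]
                · by_cases e3 : a = q'
                  · subst e3; simp [hq'x, hq'A]
                  · simp only [Finset.mem_sdiff, Finset.mem_insert, Finset.mem_erase, e1, e2, e3]
                    tauto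
            set σ' : Fin n → Fin n := Function.update σ hs q' with hσ'
            have hmap' : ∀ h ∈ (insert x (CB.erase q')) \ (insert x (CA.erase p)),
                σ' h ∈ (insert x (CA.erase p)) \ (insert x (CB.erase q')) := by
              rw [hid]
              intro h hh
              by_cases e2 : h = hs
              · subst e2
                rw [hσ', Function.update_self]
                refine Finset.mem_sdiff.mpr ⟨Finset.mem_insert_of_mem
                  (Finset.mem_erase.mpr ⟨fun e => hpB (e ▸ hq'B), hq'A⟩), ?_⟩
                intro hmem
                rcases Finset.mem_insert.mp hmem with e3 | e3
                · exact hq'x e3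
                · exact (Finset.notMem_erase q' CB) e3
              · rw [hσ', Function.update_of_ne e2]
                obtain ⟨hA', hB'⟩ := Finset.mem_sdiff.mp (hmap h hh)
                have hne_p : σ h ≠ p := fun e =>
                  e2 (hinj (Finset.mem_coe.mpr hh) (Finset.mem_coe.mpr hsH) (by rw [e, hσhs]))
                have hne_x : σ h ≠ x := fun e => hxA (e ▸ hA')
                refine Finset.mem_sdiff.mpr ⟨Finset.mem_insert_of_mem
                  (Finset.mem_erase.mpr ⟨hne_p, hA'⟩), ?_⟩
                intro hmem
                rcases Finset.mem_insert.mp hmem with e3 | e3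
                · exact hne_x e3
                · exact hB' (Finset.mem_of_mem_erase e3)
            have hinj' : Set.InjOn σ' ↑((insert x (CB.erase q')) \ (insert x (CA.erase p))) := by
              rw [hid, hσ']
              apply injOn_update_of
              · exact hinj.mono Set.diff_subset
              · intro h hh hne e
                exact (Finset.mem_sdiff.mp (hmap h (Finset.mem_coe.mp hh))).2 (by rw [e]; exact hq'B)
            have h := ih (M x) (fun y => (hM x).1 y) (insert x (CA.erase p))
              (insert x (CB.erase q')) hCA' hCB' σ' hmap' hinj' (x :: histA) (x :: histB)
            rw [sum_mul_pot hM] at h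
            have hPhi : Phi M σ' (insert x (CA.erase p)) (insert x (CB.erase q')) x ≤ S + 2 := by
              rw [Phi_eq_pVal, hid]
              have e3 := pVal_erase (M := M) (σ := σ') (x := x) hsH
              have e4 : σ' hs = q' := by rw [hσ']; exact Function.update_self hs q' σ
              have e5 : pVal M σ' x ((CB \ CA).erase hs) = pVal M σ x ((CB \ CA).erase hs) := by
                rw [hσ', pVal_update_of_not_mem (Finset.notMem_erase hs _)]
              have e6 := pVal_erase (M := M) (σ := σ) (x := x) hsH
              rw [e4, e5] at e3
              rw [hσhs] at e6
              rw [← hS] at e6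
              have b1 := alphaProb_le_one hM hs q' x
              have b2 := alphaProb_nonneg hM hs p x
              linarith
            have hα := alphaProb_nonneg hM p q' x
            linarith
      -- sum over p
      have hstepA : ∑ p ∈ CA, A (x :: histA) CA p *
          runAux M A T (M x) (x :: histA) (insert x (CA.erase p)) ≤
          ∑ p ∈ CA, A (x :: histA) CA p *
            (4 * runAux M B T (M x) (x :: histB) (insert x (CB.erase q')) +
              (S + 2 + 2 * alphaProb M p q' x)) :=
        Finset.sum_le_sum fun p hp => mul_le_mul_of_nonneg_left (claimA p hp) (hd0 p)
      have hexp : ∑ p ∈ CA, A (x :: histA) CA p *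
          (4 * runAux M B T (M x) (x :: histB) (insert x (CB.erase q')) +
            (S + 2 + 2 * alphaProb M p q' x)) =
          (4 * runAux M B T (M x) (x :: histB) (insert x (CB.erase q')) + S + 2) +
            2 * ∑ p ∈ CA, A (x :: histA) CA p * alphaProb M p q' x := by
        have expand : ∀ p ∈ CA, A (x :: histA) CA p *
            (4 * runAux M B T (M x) (x :: histB) (insert x (CB.erase q')) +
              (S + 2 + 2 * alphaProb M p q' x)) =
            (4 * runAux M B T (M x) (x :: histB) (insert x (CB.erase q')) + S + 2) *
                A (x :: histA) CA p +
              2 * (A (x :: histA) CA p * alphaProb M p q' x) := by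
          intro p _; ring
        rw [Finset.sum_congr rfl expand, Finset.sum_add_distrib, ← Finset.mul_sum,
          ← Finset.mul_sum, hdsum, mul_one]
      rw [hexp] at hstepA
      linarith
    · -- B's evicted page q' is a hole
      have hq'H : q' ∈ CB \ CA := Finset.mem_sdiff.mpr ⟨hq'B, hq'A⟩
      have claimA : ∀ p ∈ CA,
          runAux M A T (M x) (x :: histA) (insert x (CA.erase p)) ≤
            4 * runAux M B T (M x) (x :: histB) (insert x (CB.erase q')) + (S + 2) := by
        intro p hpA
        have hCA' : (insert x (CA.erase p)).card = k := by rw [card_swap hpA hxA, hCA]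
        have hpx : p ≠ x := fun e => hxA (e ▸ hpA)
        have hpq : p ≠ q' := fun e => hq'A (e ▸ hpA)
        by_cases hpB : p ∈ CB
        · -- hole q' dies, hole p is born and matched to σ q'
          have hid : (insert x (CB.erase q')) \ (insert x (CA.erase p)) =
              insert p ((CB \ CA).erase q') := by
            ext a
            by_cases e2 : a = x
            · subst e2; simp [hxB, Ne.symm hpx]
            · by_cases e1 : a = p
              · subst e1; simp [hpx, hpB, hpq]
              · by_cases e3 : a = q'
                · subst e3; simp [hq'x, Ne.symm hpq]
                · simp only [Finset.mem_sdiff, Finset.mem_insert, Finset.mem_erase, e1, e2, e3]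
                  tauto
          have hpH : p ∉ (CB \ CA).erase q' :=
            fun hmem => (Finset.mem_sdiff.mp (Finset.mem_of_mem_erase hmem)).2 hpA
          set σ' : Fin n → Fin n := Function.update σ p (σ q') with hσ'
          obtain ⟨hσq'A, hσq'B⟩ := Finset.mem_sdiff.mp (hmap q' hq'H)
          have hmap' : ∀ h ∈ (insert x (CB.erase q')) \ (insert x (CA.erase p)),
              σ' h ∈ (insert x (CA.erase p)) \ (insert x (CB.erase q')) := by
            rw [hid]
            intro h hh
            rcases Finset.mem_insert.mp hh with rfl | hh2
            · rw [hσ', Function.update_self]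
              have hne_p : σ q' ≠ h := fun e => hσq'B (e ▸ hpB)
              have hne_x : σ q' ≠ x := fun e => hxA (e ▸ hσq'A)
              refine Finset.mem_sdiff.mpr ⟨Finset.mem_insert_of_mem
                (Finset.mem_erase.mpr ⟨hne_p, hσq'A⟩), ?_⟩
              intro hmem
              rcases Finset.mem_insert.mp hmem with e3 | e3
              · exact hne_x e3
              · exact hσq'B (Finset.mem_of_mem_erase e3)
            · obtain ⟨hne, hhH⟩ := Finset.mem_erase.mp hh2
              have hhp : h ≠ p := fun e => (Finset.mem_sdiff.mp hhH).2 (e ▸ hpA)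
              rw [hσ', Function.update_of_ne hhp]
              obtain ⟨hA', hB'⟩ := Finset.mem_sdiff.mp (hmap h hhH)
              have hne_p : σ h ≠ p := fun e => hB' (e ▸ hpB)
              have hne_x : σ h ≠ x := fun e => hxA (e ▸ hA')
              refine Finset.mem_sdiff.mpr ⟨Finset.mem_insert_of_mem
                (Finset.mem_erase.mpr ⟨hne_p, hA'⟩), ?_⟩
              intro hmem
              rcases Finset.mem_insert.mp hmem with e3 | e3
              · exact hne_x e3
              · exact hB' (Finset.mem_of_mem_erase e3)
          have hinj' : Set.InjOn σ' ↑((insert x (CB.erase q')) \ (insert x (CA.erase p))) := by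
            rw [hid, hσ']
            apply injOn_update_of
            · apply hinj.mono
              intro a ha
              obtain ⟨ha1, ha2⟩ := ha
              rcases Finset.mem_insert.mp (Finset.mem_coe.mp ha1) with e | e
              · exact absurd e ha2
              · exact Finset.mem_coe.mpr (Finset.mem_of_mem_erase e)
            · intro h hh hne e
              rcases Finset.mem_insert.mp (Finset.mem_coe.mp hh) with e2 | e2
              · exact hne e2
              · obtain ⟨hne2, hhH⟩ := Finset.mem_erase.mp e2
                exact hne2 (hinj (Finset.mem_coe.mpr hhH) (Finset.mem_coe.mpr hq'H) e)
          have h := ih (M x) (fun y => (hM x).1 y) (insert x (CA.erase p))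
            (insert x (CB.erase q')) hCA' hCB' σ' hmap' hinj' (x :: histA) (x :: histB)
          rw [sum_mul_pot hM] at h
          have hPhi : Phi M σ' (insert x (CA.erase p)) (insert x (CB.erase q')) x ≤ S + 2 := by
            rw [Phi_eq_pVal, hid, pVal_insert hpH]
            have e4 : σ' p = σ q' := by rw [hσ']; exact Function.update_self p (σ q') σ
            rw [e4, hσ', pVal_update_of_not_mem hpH]
            have e6 := pVal_erase (M := M) (σ := σ) (x := x) hq'H
            rw [← hS] at e6
            have b1 := alphaProb_le_one hM p (σ q') x
            have b2 := alphaProb_nonneg hM q' (σ q') x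
            linarith
          linarith
        · -- both the hole q' and the anti-hole p die
          have hpA' : p ∈ CA \ CB := Finset.mem_sdiff.mpr ⟨hpA, hpB⟩
          obtain ⟨hs, hsH, hσhs⟩ := match_surj (hCA.trans hCB.symm) hmap hinj p hpA'
          have hid : (insert x (CB.erase q')) \ (insert x (CA.erase p)) =
              (CB \ CA).erase q' := by
            ext a
            by_cases e2 : a = x
            · subst e2; simp [hxB]
            · by_cases e1 : a = p
              · subst e1; simp [hpx, hpB]
              · by_cases e3 : a = q'
                · subst e3; simp [hq'x]
                · simp only [Finset.mem_sdiff, Finset.mem_insert, Finset.mem_erase, e1, e2, e3]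
                  tauto
          by_cases e : σ q' = p
          · -- the dying hole was matched to the dying anti-hole
            have hmap' : ∀ h ∈ (insert x (CB.erase q')) \ (insert x (CA.erase p)),
                σ h ∈ (insert x (CA.erase p)) \ (insert x (CB.erase q')) := by
              rw [hid]
              intro h hh
              obtain ⟨hne, hhH⟩ := Finset.mem_erase.mp hh
              obtain ⟨hA', hB'⟩ := Finset.mem_sdiff.mp (hmap h hhH)
              have hne_p : σ h ≠ p := fun e2 =>
                hne (hinj (Finset.mem_coe.mpr hhH) (Finset.mem_coe.mpr hq'H) (by rw [e2, e]))
              have hne_x : σ h ≠ x := fun e2 => hxA (e2 ▸ hA')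
              refine Finset.mem_sdiff.mpr ⟨Finset.mem_insert_of_mem
                (Finset.mem_erase.mpr ⟨hne_p, hA'⟩), ?_⟩
              intro hmem
              rcases Finset.mem_insert.mp hmem with e3 | e3
              · exact hne_x e3
              · exact hB' (Finset.mem_of_mem_erase e3)
            have hinj' : Set.InjOn σ ↑((insert x (CB.erase q')) \ (insert x (CA.erase p))) := by
              rw [hid]
              exact hinj.mono (by exact_mod_cast Finset.coe_subset.mpr (Finset.erase_subset _ _))
            have h := ih (M x) (fun y => (hM x).1 y) (insert x (CA.erase p))
              (insert x (CB.erase q')) hCA' hCB' σ hmap' hinj' (x :: histA) (x :: histB)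
            rw [sum_mul_pot hM] at h
            have hPhi : Phi M σ (insert x (CA.erase p)) (insert x (CB.erase q')) x ≤ S + 2 := by
              rw [Phi_eq_pVal, hid]
              have e6 := pVal_erase (M := M) (σ := σ) (x := x) hq'H
              rw [← hS] at e6
              have b2 := alphaProb_nonneg hM q' (σ q') x
              linarith
            linarith
          · -- rematch the hole of the dying anti-hole p to the freed partner σ q'
            have hsq : hs ≠ q' := fun e2 => e (by rw [← e2, hσhs])
            set σ' : Fin n → Fin n := Function.update σ hs (σ q') with hσ'
            obtain ⟨hσq'A, hσq'B⟩ := Finset.mem_sdiff.mp (hmap q' hq'H)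
            have hmap' : ∀ h ∈ (insert x (CB.erase q')) \ (insert x (CA.erase p)),
                σ' h ∈ (insert x (CA.erase p)) \ (insert x (CB.erase q')) := by
              rw [hid]
              intro h hh
              obtain ⟨hne, hhH⟩ := Finset.mem_erase.mp hh
              by_cases e2 : h = hs
              · subst e2
                rw [hσ', Function.update_self]
                have hne_x : σ q' ≠ x := fun e3 => hxA (e3 ▸ hσq'A)
                refine Finset.mem_sdiff.mpr ⟨Finset.mem_insert_of_mem
                  (Finset.mem_erase.mpr ⟨e, hσq'A⟩), ?_⟩
                intro hmem
                rcases Finset.mem_insert.mp hmem with e3 | e3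
                · exact hne_x e3
                · exact hσq'B (Finset.mem_of_mem_erase e3)
              · rw [hσ', Function.update_of_ne e2]
                obtain ⟨hA', hB'⟩ := Finset.mem_sdiff.mp (hmap h hhH)
                have hne_p : σ h ≠ p := fun e3 =>
                  e2 (hinj (Finset.mem_coe.mpr hhH) (Finset.mem_coe.mpr hsH) (by rw [e3, hσhs]))
                have hne_x : σ h ≠ x := fun e3 => hxA (e3 ▸ hA')
                refine Finset.mem_sdiff.mpr ⟨Finset.mem_insert_of_mem
                  (Finset.mem_erase.mpr ⟨hne_p, hA'⟩), ?_⟩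
                intro hmem
                rcases Finset.mem_insert.mp hmem with e3 | e3
                · exact hne_x e3
                · exact hB' (Finset.mem_of_mem_erase e3)
            have hinj' : Set.InjOn σ' ↑((insert x (CB.erase q')) \ (insert x (CA.erase p))) := by
              rw [hid, hσ']
              apply injOn_update_of
              · exact hinj.mono (Set.diff_subset.trans
                  (by exact_mod_cast Finset.coe_subset.mpr (Finset.erase_subset _ _)))
              · intro h hh hne e2
                obtain ⟨hne2, hhH⟩ := Finset.mem_erase.mp (Finset.mem_coe.mp hh)
                exact hne2 (hinj (Finset.mem_coe.mpr hhH) (Finset.mem_coe.mpr hq'H) e2)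
            have h := ih (M x) (fun y => (hM x).1 y) (insert x (CA.erase p))
              (insert x (CB.erase q')) hCA' hCB' σ' hmap' hinj' (x :: histA) (x :: histB)
            rw [sum_mul_pot hM] at h
            have hPhi : Phi M σ' (insert x (CA.erase p)) (insert x (CB.erase q')) x ≤ S + 2 := by
              rw [Phi_eq_pVal, hid]
              have hsHe : hs ∈ (CB \ CA).erase q' := Finset.mem_erase.mpr ⟨hsq, hsH⟩
              have e3 := pVal_erase (M := M) (σ := σ') (x := x) hsHe
              have e4 : σ' hs = σ q' := by rw [hσ']; exact Function.update_self hs (σ q') σ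
              have e5 : pVal M σ' x (((CB \ CA).erase q').erase hs) =
                  pVal M σ x (((CB \ CA).erase q').erase hs) := by
                rw [hσ', pVal_update_of_not_mem (Finset.notMem_erase hs _)]
              have e6 := pVal_erase (M := M) (σ := σ) (x := x) hsHe
              have e7 := pVal_erase (M := M) (σ := σ) (x := x) hq'H
              rw [e4, e5] at e3
              rw [hσhs] at e6
              rw [← hS] at e7
              have b1 := alphaProb_le_one hM hs (σ q') x
              have b2 := alphaProb_nonneg hM hs p x
              have b3 := alphaProb_nonneg hM q' (σ q') x
              linarith
            linarith
      -- sum over p, uniform bound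
      have hstepA : ∑ p ∈ CA, A (x :: histA) CA p *
          runAux M A T (M x) (x :: histA) (insert x (CA.erase p)) ≤
          ∑ p ∈ CA, A (x :: histA) CA p *
            (4 * runAux M B T (M x) (x :: histB) (insert x (CB.erase q')) + (S + 2)) :=
        Finset.sum_le_sum fun p hp => mul_le_mul_of_nonneg_left (claimA p hp) (hd0 p)
      rw [← Finset.sum_mul, hdsum, one_mul] at hstepA
      linarith
  -- combine over B's evictions
  have hstep : ∑ p ∈ CA, A (x :: histA) CA p *
      runAux M A T (M x) (x :: histA) (insert x (CA.erase p)) ≤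
      ∑ q' ∈ CB, B (x :: histB) CB q' *
        (4 * runAux M B T (M x) (x :: histB) (insert x (CB.erase q')) + (S + 3)) := by
    calc ∑ p ∈ CA, A (x :: histA) CA p *
        runAux M A T (M x) (x :: histA) (insert x (CA.erase p))
        = (∑ q' ∈ CB, B (x :: histB) CB q') * ∑ p ∈ CA, A (x :: histA) CA p *
            runAux M A T (M x) (x :: histA) (insert x (CA.erase p)) := by
          rw [hbsum, one_mul]
      _ = ∑ q' ∈ CB, B (x :: histB) CB q' * ∑ p ∈ CA, A (x :: histA) CA p *
            runAux M A T (M x) (x :: histA) (insert x (CA.erase p)) :=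
          Finset.sum_mul _ _ _
      _ ≤ _ := Finset.sum_le_sum fun q' hq' =>
          mul_le_mul_of_nonneg_left (claimB q' hq') (hb0 q')
  have hexp : ∑ q' ∈ CB, B (x :: histB) CB q' *
      (4 * runAux M B T (M x) (x :: histB) (insert x (CB.erase q')) + (S + 3)) =
      4 * (∑ q' ∈ CB, B (x :: histB) CB q' *
        runAux M B T (M x) (x :: histB) (insert x (CB.erase q'))) + (S + 3) := by
    have expand : ∀ q' ∈ CB, B (x :: histB) CB q' *
        (4 * runAux M B T (M x) (x :: histB) (insert x (CB.erase q')) + (S + 3)) =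
        4 * (B (x :: histB) CB q' * runAux M B T (M x) (x :: histB) (insert x (CB.erase q')))
          + (S + 3) * B (x :: histB) CB q' := by
      intro q' _; ring
    rw [Finset.sum_congr rfl expand, Finset.sum_add_distrib, ← Finset.mul_sum, ← Finset.mul_sum,
      hbsum, mul_one]
  rw [hexp] at hstep
  linarith

end Cases

lemma key (hM : IsStochastic M) {k : ℕ} {A B : Policy n}
    (hA : IsDomPolicy k M A) (hB : IsPolicy k B) :
    ∀ T : ℕ, KeyIH M k A B T := by
  intro T
  induction T with
  | zero =>
      intro dist hdist CA CB hCA hCB σ hmap hinj histA histB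
      rw [runAux, runAux]
      have h1 : (0:ℝ) ≤ ∑ x : Fin n, dist x * pot M σ CA CB x := by
        apply Finset.sum_nonneg
        intro x _
        exact mul_nonneg (hdist x) (pot_nonneg hM σ CA CB x)
      linarith
  | succ T ih =>
      intro dist hdist CA CB hCA hCB σ hmap hinj histA histB
      rw [runAux, runAux]
      have key_x : ∀ x : Fin n,
          (if x ∈ CA then runAux M A T (M x) (x :: histA) CA
           else 1 + ∑ p ∈ CA, A (x :: histA) CA p *
              runAux M A T (M x) (x :: histA) (insert x (CA.erase p)))
        ≤ 4 * (if x ∈ CB then runAux M B T (M x) (x :: histB) CB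
           else 1 + ∑ q ∈ CB, B (x :: histB) CB q *
              runAux M B T (M x) (x :: histB) (insert x (CB.erase q)))
          + pot M σ CA CB x := by
        intro x
        by_cases hxA : x ∈ CA <;> by_cases hxB : x ∈ CB
        · rw [if_pos hxA, if_pos hxB]
          exact case_hit_hit hM ih hCA hCB hmap hinj hxA hxB
        · rw [if_pos hxA, if_neg hxB]
          exact case_hit_miss hM ih hB hCA hCB hmap hinj hxA hxB
        · rw [if_neg hxA, if_pos hxB]
          exact case_miss_hit hM ih hA hCA hCB hmap hinj hxA hxB
        · rw [if_neg hxA, if_neg hxB]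
          exact case_miss_miss hM ih hA hB hCA hCB hmap hinj hxA hxB
      calc (∑ x : Fin n, dist x *
              (if x ∈ CA then runAux M A T (M x) (x :: histA) CA
               else 1 + ∑ p ∈ CA, A (x :: histA) CA p *
                  runAux M A T (M x) (x :: histA) (insert x (CA.erase p))))
          ≤ ∑ x : Fin n, dist x *
              (4 * (if x ∈ CB then runAux M B T (M x) (x :: histB) CB
               else 1 + ∑ q ∈ CB, B (x :: histB) CB q *
                  runAux M B T (M x) (x :: histB) (insert x (CB.erase q)))
                + pot M σ CA CB x) :=
            Finset.sum_le_sum fun x _ => mul_le_mul_of_nonneg_left (key_x x) (hdist x)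
        _ = 4 * (∑ x : Fin n, dist x *
              (if x ∈ CB then runAux M B T (M x) (x :: histB) CB
               else 1 + ∑ q ∈ CB, B (x :: histB) CB q *
                  runAux M B T (M x) (x :: histB) (insert x (CB.erase q))))
              + ∑ x : Fin n, dist x * pot M σ CA CB x := by
            rw [Finset.mul_sum, ← Finset.sum_add_distrib]
            exact Finset.sum_congr rfl fun x _ => by ring

end LPR

/-- **Theorem (Lund–Phillips–Reingold: 4-competitiveness of the dominating distribution
algorithm).**  Every dominating distribution algorithm `A` is 4-competitive against the
optimal online policy: for every online paging policy `B` started from the same initial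
cache and every horizon `T`, `E[cost(A, T)] ≤ 4 · E[cost(B, T)]`. -/
theorem dominating_distribution_four_competitive {n k : ℕ} (hkn : k < n)
    (M : Fin n → Fin n → ℝ) (hM : IsStochastic M)
    (init : Fin n → ℝ) (hinit : IsDist init)
    (C₀ : Finset (Fin n)) (hC₀ : C₀.card = k)
    (A : Policy n) (hA : IsDomPolicy k M A)
    (B : Policy n) (hB : IsPolicy k B) (T : ℕ) :
    expCost M init A C₀ T ≤ 4 * expCost M init B C₀ T := by
  have hmap : ∀ h ∈ C₀ \ C₀, (id h : Fin n) ∈ C₀ \ C₀ := by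
    intro h hh
    rw [Finset.sdiff_self] at hh
    exact absurd hh (Finset.notMem_empty h)
  have hinj : Set.InjOn (id : Fin n → Fin n) ↑(C₀ \ C₀) := by
    intro a ha
    rw [Finset.sdiff_self] at ha
    exact absurd ha (by simp)
  have h := LPR.key hM hA hB T init hinit.1 C₀ C₀ hC₀ hC₀ id hmap hinj [] []
  have hpot : ∀ x, LPR.pot M id C₀ C₀ x = 0 := by
    intro x
    unfold LPR.pot
    rw [Finset.sdiff_self, Finset.sum_empty]
  unfold expCost
  calc runAux M A T init [] C₀ ≤ 4 * runAux M B T init [] C₀ +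
        ∑ x : Fin n, init x * LPR.pot M id C₀ C₀ x := h
    _ = 4 * runAux M B T init [] C₀ := by
        simp [hpot]
end

section
/- Let C be a nonempty finite set and let α : C × C → ℝ satisfy 0 ≤ α(p,q) ≤ 1 for all p, q ∈ C, α(p,p) = 0 for all p ∈ C, and α(p,q) + α(q,p) = 1 whenever p ≠ q. Then there exists a probability distribution μ on C (i.e., μ(p) ≥ 0 for all p and Σ_{p∈C} μ(p) = 1) such that for every q ∈ C, Σ_{p∈C} μ(p)·α(p,q) ≤ 1/2. -/
open Finset

/-- Key minimax-type lemma: if `B p q + B q p ≤ 0` for all `p, q`, then there is a point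
of the standard simplex `ν` with `∑ p, ν p * B p q ≤ 0` for every `q`. -/
private lemma key_lemma {n : Type*} [Fintype n] [Nonempty n] [DecidableEq n]
    (B : n → n → ℝ) (hB : ∀ p q, B p q + B q p ≤ 0) :
    ∃ ν ∈ stdSimplex ℝ n, ∀ q, (∑ p, ν p * B p q) ≤ 0 := by
  by_contra hcon
  push_neg at hcon
  -- the linear map `μ ↦ (q ↦ ∑ p, B p q * μ p)`
  set T : (n → ℝ) →ₗ[ℝ] (n → ℝ) :=
    LinearMap.pi (fun q => ∑ p, B p q • LinearMap.proj p) with hT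
  have hTapp : ∀ (μ : n → ℝ) (q : n), T μ q = ∑ p, μ p * B p q := by
    intro μ q
    simp [hT, LinearMap.pi_apply, LinearMap.sum_apply, mul_comm]
  set S : Set (n → ℝ) := T '' stdSimplex ℝ n with hS
  set N : Set (n → ℝ) := ⋂ q, {x : n → ℝ | x q ≤ 0} with hN
  have hmemN : ∀ x : n → ℝ, x ∈ N ↔ ∀ q, x q ≤ 0 := by
    intro x; simp [hN]
  have hdisj : Disjoint S N := by
    rw [Set.disjoint_left]
    rintro x ⟨ν, hν, rfl⟩ hxN
    obtain ⟨q, hq⟩ := hcon ν hν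
    have := (hmemN _).1 hxN q
    rw [hTapp] at this
    linarith
  have hScpt : IsCompact S := (isCompact_stdSimplex ℝ n).image T.continuous_of_finiteDimensional
  have hSconv : Convex ℝ S := (convex_stdSimplex ℝ n).linear_image T
  have hNclosed : IsClosed N :=
    isClosed_iInter fun q => isClosed_le (continuous_apply q) continuous_const
  have hNconv : Convex ℝ N := by
    intro x hx y hy a b ha hb hab
    rw [hmemN] at hx hy ⊢
    intro q
    have hx' := hx q; have hy' := hy q
    have : (a • x + b • y) q = a * x q + b * y q := by simp
    rw [this]
    nlinarith
  obtain ⟨f, u, v, hfu, huv, hvf⟩ :=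
    geometric_hahn_banach_compact_closed hSconv hScpt hNconv hNclosed hdisj
  -- the separating functional gives a vector `y ≥ 0`
  set y : n → ℝ := fun q => -(f (Pi.single q 1)) with hy
  have hv0 : v < 0 := by
    have h0 : (0 : n → ℝ) ∈ N := (hmemN _).2 fun q => le_refl 0
    have := hvf 0 h0
    simpa using this
  have hy0 : ∀ q, 0 ≤ y q := by
    intro q
    by_contra hneg
    push_neg at hneg
    have hc : 0 < f (Pi.single q 1) := by
      simp only [hy] at hneg; linarith
    set t : ℝ := (|v| + 1) / f (Pi.single q 1) with ht
    have htpos : 0 < t := div_pos (by positivity) hc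
    set e : n → ℝ := Pi.single q 1 with he
    have hmem : (-t) • e ∈ N := by
      rw [hmemN]
      intro j
      have hsingle : (0 : ℝ) ≤ e j := by
        rcases eq_or_ne j q with rfl | hj
        · simp [he]
        · simp [he, Pi.single_apply, hj]
      have : ((-t) • e) j = -t * e j := by simp
      rw [this]
      nlinarith
    have := hvf _ hmem
    rw [map_smul] at this
    have hval : (-t) • f (Pi.single q 1) = -(|v| + 1) := by
      rw [smul_eq_mul, ht]
      field_simp
      rfl
    rw [hval] at this
    have habs := neg_abs_le v
    linarith
  -- `f x = -∑ q, x q * y q`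
  have hfeval : ∀ x : n → ℝ, f x = -∑ q, x q * y q := by
    intro x
    have hx : x = ∑ q, x q • (Pi.single q 1 : n → ℝ) := by
      conv_lhs => rw [← Finset.univ_sum_single x]
      refine Finset.sum_congr rfl fun q _ => ?_
      ext j
      rcases eq_or_ne j q with rfl | hj
      · simp
      · simp [Pi.single_apply, hj]
    conv_lhs => rw [hx]
    rw [map_sum]
    simp only [map_smul, smul_eq_mul, hy]
    rw [← Finset.sum_neg_distrib]
    exact Finset.sum_congr rfl fun q _ => by ring
  -- every element of S pairs positively with y
  have hSpos : ∀ a ∈ S, 0 < ∑ q, a q * y q := by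
    intro a ha
    have := hfu a ha
    rw [hfeval] at this
    linarith
  -- y is nonzero, so we can normalize it to ν in the simplex
  have hypos : ∃ q, 0 < y q := by
    by_contra hall
    push_neg at hall
    have hzero : ∀ q, y q = 0 := fun q => le_antisymm (hall q) (hy0 q)
    have hmem0 : T (Pi.single (Classical.arbitrary n) 1) ∈ S :=
      Set.mem_image_of_mem _ (single_mem_stdSimplex ℝ _)
    have := hSpos _ hmem0
    simp [hzero] at this
  set sY : ℝ := ∑ q, y q with hsY
  have hsYpos : 0 < sY := Finset.sum_pos' (fun q _ => hy0 q) (by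
    obtain ⟨q, hq⟩ := hypos; exact ⟨q, Finset.mem_univ q, hq⟩)
  set ν : n → ℝ := fun q => y q / sY with hν
  have hνmem : ν ∈ stdSimplex ℝ n := by
    constructor
    · intro q; exact div_nonneg (hy0 q) hsYpos.le
    · rw [hν, ← Finset.sum_div, ← hsY, div_self hsYpos.ne']
  have hyν : ∀ q, y q = sY * ν q := by
    intro q; rw [hν]; field_simp
  -- the quadratic form is nonpositive
  have hQ : (∑ q, (∑ p, ν p * B p q) * ν q) ≤ 0 := by
    have hswap : (∑ q, (∑ p, ν p * B p q) * ν q)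
        = ∑ p, ∑ q, ν p * ν q * B p q := by
      rw [Finset.sum_comm]
      refine Finset.sum_congr rfl fun p _ => ?_
      rw [Finset.sum_mul]
      refine Finset.sum_congr rfl fun q _ => by ring
    have hswap2 : (∑ q, (∑ p, ν p * B p q) * ν q)
        = ∑ p, ∑ q, ν p * ν q * B q p := by
      refine Finset.sum_congr rfl fun p _ => ?_
      rw [Finset.sum_mul]
      refine Finset.sum_congr rfl fun q _ => by ring
    have hsplit : (∑ p, ∑ q, ν p * ν q * (B p q + B q p))
        = (∑ p, ∑ q, ν p * ν q * B p q) + (∑ p, ∑ q, ν p * ν q * B q p) := by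
      rw [← Finset.sum_add_distrib]
      refine Finset.sum_congr rfl fun p _ => ?_
      rw [← Finset.sum_add_distrib]
      refine Finset.sum_congr rfl fun q _ => by ring
    have hnonpos : (∑ p, ∑ q, ν p * ν q * (B p q + B q p)) ≤ 0 := by
      refine Finset.sum_nonpos fun p _ => Finset.sum_nonpos fun q _ => ?_
      have h1 : 0 ≤ ν p * ν q := mul_nonneg (hνmem.1 p) (hνmem.1 q)
      exact mul_nonpos_of_nonneg_of_nonpos h1 (hB p q)
    linarith [hsplit ▸ hnonpos, hswap, hswap2]
  -- but T ν ∈ S pairs positively with y, contradiction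
  have hTν : T ν ∈ S := Set.mem_image_of_mem _ hνmem
  have hpos := hSpos _ hTν
  have heq : (∑ q, T ν q * y q) = sY * ∑ q, (∑ p, ν p * B p q) * ν q := by
    rw [Finset.mul_sum]
    refine Finset.sum_congr rfl fun q _ => ?_
    rw [hTapp, hyν q]
    ring
  rw [heq] at hpos
  nlinarith

/-- **Theorem (existence of a dominating distribution).**
Let `C` be a nonempty finite set and let `α : C × C → ℝ` satisfy `0 ≤ α(p,q) ≤ 1` for
all `p, q ∈ C`, `α(p,p) = 0` for all `p ∈ C`, and `α(p,q) + α(q,p) = 1` whenever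
`p ≠ q`.  Then there exists a probability distribution `μ` on `C` such that for every
`q ∈ C`, `∑_{p ∈ C} μ(p)·α(p,q) ≤ 1/2`. -/
theorem dominating_distribution_exists {V : Type*} [DecidableEq V]
    (C : Finset V) (hC : C.Nonempty) (α : V → V → ℝ)
    (h01 : ∀ p ∈ C, ∀ q ∈ C, 0 ≤ α p q ∧ α p q ≤ 1)
    (hdiag : ∀ p ∈ C, α p p = 0)
    (hanti : ∀ p ∈ C, ∀ q ∈ C, p ≠ q → α p q + α q p = 1) :
    ∃ μ : V → ℝ, (∀ p, 0 ≤ μ p) ∧ (∀ p ∉ C, μ p = 0) ∧ (∑ p ∈ C, μ p) = 1 ∧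
      ∀ q ∈ C, (∑ p ∈ C, μ p * α p q) ≤ 1 / 2 := by
  haveI : Nonempty {x // x ∈ C} := ⟨⟨hC.choose, hC.choose_spec⟩⟩
  set B : {x // x ∈ C} → {x // x ∈ C} → ℝ := fun p q => α p q - 1/2 with hB
  have hBanti : ∀ p q, B p q + B q p ≤ 0 := by
    rintro ⟨p, hp⟩ ⟨q, hq⟩
    rcases eq_or_ne p q with rfl | hpq
    · simp [hB, hdiag p hp]
    · simp only [hB]
      have := hanti p hp q hq hpq
      linarith
  obtain ⟨ν, hνmem, hνle⟩ := key_lemma B hBanti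
  refine ⟨fun v => if h : v ∈ C then ν ⟨v, h⟩ else 0, ?_, ?_, ?_, ?_⟩
  · intro p
    by_cases h : p ∈ C
    · simp only [dif_pos h]; exact hνmem.1 _
    · simp [h]
  · intro p hp; simp [hp]
  · rw [← Finset.sum_coe_sort C]
    have : ∀ i : {x // x ∈ C},
        (if h : (i : V) ∈ C then ν ⟨i, h⟩ else 0) = ν i := by
      intro i; rw [dif_pos i.2]
    rw [Finset.sum_congr rfl fun i _ => this i]
    exact hνmem.2
  · intro q hq
    rw [← Finset.sum_coe_sort C]
    have hre : ∀ i : {x // x ∈ C},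
        (if h : (i : V) ∈ C then ν ⟨i, h⟩ else 0) * α i q = ν i * α i q := by
      intro i; rw [dif_pos i.2]
    rw [Finset.sum_congr rfl fun i _ => hre i]
    have := hνle ⟨q, hq⟩
    have hexpand : (∑ p : {x // x ∈ C}, ν p * B p ⟨q, hq⟩)
        = (∑ p : {x // x ∈ C}, ν p * α p q) - 1/2 := by
      simp only [hB]
      rw [Finset.sum_congr rfl fun p _ => (by ring :
        ν p * (α p q - 1/2) = ν p * α p q - ν p * (1/2)), Finset.sum_sub_distrib,
        ← Finset.sum_mul, hνmem.2]
      ring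
    linarith [hexpand ▸ this]
end

section
/- Under the updated charging scheme, for every request sequence, every pair of runs of A and OPT, and every horizon T: cost(OPT, T) ≥ Σ_{t ≤ T} β(t) + ℐ − 𝒟 − 𝒪 + 𝒰, where β(t) = 1 if A suffers a miss and evicts a page p at time t such that the page c(p) assigned to p at this eviction is requested, strictly after time t, no later than the first request to p after time t (and β(t) = 0 otherwise), cost(OPT, T) is the number of cache misses of OPT during the first T requests, and ℐ, 𝒟, 𝒪, 𝒰 are evaluated at horizon T. -/
open Finset
open scoped Classical

/-! ## The updated charging scheme

We fix an infinite request sequence and fixed runs of an online paging policy `A`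
and of an online policy `OPT` on it, both from the same initial cache of size `k`.
Each page `p` carries a value `chg p ∈ Option Page` (`none` = no charge given);
`p` gives a charge to the page `chg p` when `chg p ≠ none`, and that page bears it.
When a page `s` is requested at time `t` the charges are updated in order:
(1a) `c(s) := none`; (1b) every `p` with `c(p) = s` gets `c(p) := none`;
(2) if `A` misses and evicts `p`: if `p` is not in `OPT`'s cache just after the
request then `c(p) := p`, otherwise `c(p) := q` for a page `q` of `A`'s cache just
before the request, outside `OPT`'s cache just after it, bearing no charge from any
page of `OPT⁺ \ A⁻`;
(3) if `OPT` evicts `p` then `c(p) := p`. -/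

/-- One step of a paging run: on a hit nothing happens, on a miss some cached page `p`
is evicted and the requested page brought in. -/
def CacheStep {Page : Type} [DecidableEq Page] (s : Page) (C C' : Finset Page)
    (ev : Option Page) : Prop :=
  (s ∈ C ∧ ev = none ∧ C' = C) ∨
    (s ∉ C ∧ ∃ p ∈ C, ev = some p ∧ C' = insert s (C.erase p))

/-- Steps (1a) and (1b): when `s` is requested, clear the charge `s` gives and every
charge borne by `s`. -/
def clearStep {Page : Type} [DecidableEq Page] (s : Page) (c : Page → Option Page) :
    Page → Option Page :=
  fun x => if x = s ∨ c x = some s then none else c x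

/-- Step (2): if `A` evicted `p` (cache `CA` just before the request, `OPT`'s cache
`CO` just after it), assign `p`'s charge. -/
def AStep {Page : Type} [DecidableEq Page] (CA CO : Finset Page) (ev : Option Page)
    (c c' : Page → Option Page) : Prop :=
  match ev with
  | none => c' = c
  | some p =>
      (p ∉ CO ∧ c' = Function.update c p (some p)) ∨
        (p ∈ CO ∧ ∃ q ∈ CA, q ∉ CO ∧
          (∀ x ∈ CO, x ∉ CA → c x ≠ some q) ∧
          c' = Function.update c p (some q))

/-- Step (3): if `OPT` evicted `p`, set `c(p) := p`. -/
def optStep {Page : Type} [DecidableEq Page] (ev : Option Page)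
    (c : Page → Option Page) : Page → Option Page :=
  match ev with
  | none => c
  | some p => Function.update c p (some p)

/-- A joint run of the request sequence, of the two paging algorithms `A` and `OPT`
(started from the same initial cache of size `k`), and of the updated charging scheme.
`req t` is the page requested at time `t`; `cacheA t`, `cacheOpt t` and `chg t` are the
caches and the charge function just before that request; `evA t`, `evOpt t` are the
pages evicted at time `t` (if any). -/
structure ChargingRun (Page : Type) [DecidableEq Page] where
  k : ℕ
  req : ℕ → Page
  cacheA : ℕ → Finset Page
  cacheOpt : ℕ → Finset Page
  evA : ℕ → Option Page
  evOpt : ℕ → Option Page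
  chg : ℕ → Page → Option Page
  init_card : (cacheA 0).card = k
  init_eq : cacheOpt 0 = cacheA 0
  chg_init : ∀ p, chg 0 p = none
  stepA : ∀ t, CacheStep (req t) (cacheA t) (cacheA (t + 1)) (evA t)
  stepOpt : ∀ t, CacheStep (req t) (cacheOpt t) (cacheOpt (t + 1)) (evOpt t)
  chg_step : ∀ t, ∃ c₂, AStep (cacheA t) (cacheOpt (t + 1)) (evA t)
      (clearStep (req t) (chg t)) c₂ ∧ chg (t + 1) = optStep (evOpt t) c₂

variable {Page : Type} [DecidableEq Page] [Fintype Page]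

/-- The set of pages giving a charge to `x` just before the request at time `t`. -/
def bearers (R : ChargingRun Page) (t : ℕ) (x : Page) : Finset Page :=
  univ.filter fun p => R.chg t p = some x

/-- `ℐ` after `T` requests: the number of pages not in the initial cache requested at
some time `< T`. -/
def Icount (R : ChargingRun Page) (T : ℕ) : ℕ :=
  (((range T).image R.req) \ R.cacheA 0).card

/-- `𝒪` after `T` requests: the number of pages currently not in `A`'s cache that give
a charge. -/
def Ocount (R : ChargingRun Page) (T : ℕ) : ℕ :=
  (univ.filter fun p => p ∉ R.cacheA T ∧ R.chg T p ≠ none).card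

/-- `𝒟` after `T` requests: the number of times `< T` at which the requested page bore
two charges just before the request. -/
def Dcount (R : ChargingRun Page) (T : ℕ) : ℕ :=
  ((range T).filter fun t => (bearers R t (R.req t)).card = 2).card

/-- `𝒰` after `T` requests: the number of times `< T` at which the requested page was
absent from `OPT`'s cache because `OPT` had previously evicted it, and bore no charge
just before the request. -/
def Ucount (R : ChargingRun Page) (T : ℕ) : ℕ :=
  ((range T).filter fun t =>
    R.req t ∉ R.cacheOpt t ∧ (∃ t' < t, R.evOpt t' = some (R.req t)) ∧
      bearers R t (R.req t) = ∅).card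

/-- `Φ = ℐ − 𝒟 − 𝒪 + 𝒰` after `T` requests (so `Phi R 0 = 0` before the first
request, and `Phi R (t+1)` is the value after the processing of the request at
time `t`). -/
def Phi (R : ChargingRun Page) (T : ℕ) : ℤ :=
  (Icount R T : ℤ) - (Dcount R T : ℤ) - (Ocount R T : ℤ) + (Ucount R T : ℤ)

/-- The condition on the request at time `t`: just before the request, the requested
page is in `OPT`'s cache, is not in `A`'s cache, gives no charge and bears no
charge. -/
def GoodReq (R : ChargingRun Page) (t : ℕ) : Prop :=
  R.req t ∈ R.cacheOpt t ∧ R.req t ∉ R.cacheA t ∧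
    R.chg t (R.req t) = none ∧ ∀ p, R.chg t p ≠ some (R.req t)

/-- The first time strictly after `t` at which page `x` is requested (`⊤` if none). -/
noncomputable def nextReq (R : ChargingRun Page) (t : ℕ) (x : Page) : ℕ∞ :=
  ⨅ m ∈ {m : ℕ | t < m ∧ R.req m = x}, (m : ℕ∞)

/-- `β(t) = 1` iff `A` suffers a miss at time `t`, evicting a page `p`, and the page
`c(p)` assigned to `p` at this eviction is requested, strictly after time `t`, no later
than the first request to `p` after time `t`. -/
def Beta (R : ChargingRun Page) (t : ℕ) : Prop :=
  ∃ p u, R.evA t = some p ∧ R.chg (t + 1) p = some u ∧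
    ∃ m : ℕ, t < m ∧ R.req m = u ∧ (m : ℕ∞) ≤ nextReq R t p

/-- `cost(OPT, T)`: the number of cache misses of `OPT` during the first `T`
requests. -/
def costOpt (R : ChargingRun Page) (T : ℕ) : ℕ :=
  ((range T).filter fun t => R.req t ∉ R.cacheOpt t).card


/-! ### Auxiliary lemmas -/

namespace CacheStep

variable {Page : Type} [DecidableEq Page] {s : Page} {C C' : Finset Page} {ev : Option Page}

theorem ev_spec (h : CacheStep s C C' ev) {p : Page} (hp : ev = some p) :
    p ∈ C ∧ s ∉ C ∧ C' = insert s (C.erase p) := by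
  rcases h with ⟨_, h1, _⟩ | ⟨hs, q, hq, h1, h2⟩
  · rw [hp] at h1; cases h1
  · rw [hp] at h1; injection h1 with h1; subst h1; exact ⟨hq, hs, h2⟩

theorem req_mem (h : CacheStep s C C' ev) : s ∈ C' := by
  rcases h with ⟨h0, _, h2⟩ | ⟨_, q, _, _, h2⟩
  · rw [h2]; exact h0
  · rw [h2]; exact mem_insert_self _ _

theorem mem_succ (h : CacheStep s C C' ev) {x : Page} (hx : x ∈ C') : x = s ∨ x ∈ C := by
  rcases h with ⟨_, _, h2⟩ | ⟨_, q, hq, _, h2⟩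
  · exact Or.inr (h2 ▸ hx)
  · rw [h2, mem_insert] at hx
    exact hx.imp id (fun h' => mem_of_mem_erase h')

theorem stay (h : CacheStep s C C' ev) {x : Page} (hx : x ∈ C) (hev : ev ≠ some x) :
    x ∈ C' := by
  rcases h with ⟨_, _, h2⟩ | ⟨_, q, hq, h1, h2⟩
  · exact h2 ▸ hx
  · rw [h2, mem_insert]
    refine Or.inr (mem_erase.2 ⟨?_, hx⟩)
    rintro rfl; exact hev h1

theorem not_mem_evicted (h : CacheStep s C C' ev) {p : Page} (hp : ev = some p) :
    p ∉ C' := by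
  obtain ⟨hpC, hsC, hC'⟩ := h.ev_spec hp
  rw [hC', mem_insert]
  rintro (rfl | h')
  · exact hsC hpC
  · exact (notMem_erase p C) h'

theorem ev_of_miss (h : CacheStep s C C' ev) (hs : s ∉ C) : ∃ p, ev = some p := by
  rcases h with ⟨h0, _, _⟩ | ⟨_, q, _, h1, _⟩
  · exact absurd h0 hs
  · exact ⟨q, h1⟩

theorem mem_of_ev (h : CacheStep s C C' ev) {p : Page} (hp : ev = some p) : p ∈ C :=
  (h.ev_spec hp).1

theorem miss_of_ev (h : CacheStep s C C' ev) {p : Page} (hp : ev = some p) : s ∉ C :=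
  (h.ev_spec hp).2.1

end CacheStep

set_option linter.unusedSectionVars false

namespace ChargingRun

variable {Page : Type} [DecidableEq Page] [Fintype Page] (R : ChargingRun Page)

theorem mem_cacheA_src : ∀ {t x}, x ∈ R.cacheA t → x ∈ R.cacheA 0 ∨ ∃ r < t, R.req r = x := by
  intro t
  induction t with
  | zero => intro x hx; exact Or.inl hx
  | succ T ih =>
    intro x hx
    rcases (R.stepA T).mem_succ hx with rfl | hx'
    · exact Or.inr ⟨T, Nat.lt_succ_self T, rfl⟩
    · rcases ih hx' with h | ⟨r, hr, h⟩
      · exact Or.inl h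
      · exact Or.inr ⟨r, hr.trans (Nat.lt_succ_self T), h⟩

theorem mem_cacheOpt_src : ∀ {t x}, x ∈ R.cacheOpt t → x ∈ R.cacheA 0 ∨ ∃ r < t, R.req r = x := by
  intro t
  induction t with
  | zero => intro x hx; exact Or.inl (R.init_eq ▸ hx)
  | succ T ih =>
    intro x hx
    rcases (R.stepOpt T).mem_succ hx with rfl | hx'
    · exact Or.inr ⟨T, Nat.lt_succ_self T, rfl⟩
    · rcases ih hx' with h | ⟨r, hr, h⟩
      · exact Or.inl h
      · exact Or.inr ⟨r, hr.trans (Nat.lt_succ_self T), h⟩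

/-- If `x` is in OPT's cache at time `a` but not at time `b ≥ a`, OPT evicted `x`
at some time in `[a, b)`. -/
theorem opt_evicted_of_leave {x : Page} : ∀ {b a}, a ≤ b → x ∈ R.cacheOpt a →
    x ∉ R.cacheOpt b → ∃ r, a ≤ r ∧ r < b ∧ R.evOpt r = some x := by
  intro b
  induction b with
  | zero => intro a ha h1 h2; exact absurd (Nat.le_zero.1 ha ▸ h1) h2
  | succ b ih =>
    intro a ha h1 h2
    rcases Nat.lt_or_ge a (b+1) with h | h
    · have hab : a ≤ b := Nat.lt_succ_iff.1 h
      by_cases hb : x ∈ R.cacheOpt b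
      · -- left between b and b+1
        cases hev : R.evOpt b with
        | none =>
          exfalso; exact h2 ((R.stepOpt b).stay hb (by simp [hev]))
        | some p =>
          by_cases hpx : p = x
          · exact ⟨b, hab, Nat.lt_succ_self b, by rw [hev, hpx]⟩
          · exfalso; exact h2 ((R.stepOpt b).stay hb (by simp [hev, hpx]))
      · obtain ⟨r, hr1, hr2, hr3⟩ := ih hab h1 hb
        exact ⟨r, hr1, hr2.trans (Nat.lt_succ_self b), hr3⟩
    · exact absurd ((Nat.le_antisymm h ha) ▸ h1) h2

theorem evA_ne_req {T : ℕ} {p : Page} (hp : R.evA T = some p) : p ≠ R.req T := by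
  rintro rfl
  exact (R.stepA T).miss_of_ev hp ((R.stepA T).mem_of_ev hp)

theorem evOpt_ne_req {T : ℕ} {p : Page} (hp : R.evOpt T = some p) : p ≠ R.req T := by
  rintro rfl
  exact (R.stepOpt T).miss_of_ev hp ((R.stepOpt T).mem_of_ev hp)

/-- The requested page gives no charge just after its request. -/
theorem chg_req_succ (T : ℕ) : R.chg (T + 1) (R.req T) = none := by
  obtain ⟨c₂, hA, hO⟩ := R.chg_step T
  set s := R.req T with hs
  have hc₁ : clearStep s (R.chg T) s = none := by simp [clearStep]
  have hc₂ : c₂ s = none := by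
    cases hEA : R.evA T with
    | none => rw [hEA] at hA; simp only [AStep] at hA; rw [hA, hc₁]
    | some p =>
      have hps : p ≠ s := R.evA_ne_req hEA
      rw [hEA] at hA
      rcases hA with ⟨_, h⟩ | ⟨_, q, _, _, _, h⟩ <;>
        rw [h, Function.update_of_ne (Ne.symm hps), hc₁]
  rw [hO]
  cases hEO : R.evOpt T with
  | none => simpa [optStep] using hc₂
  | some p =>
    have hps : p ≠ s := R.evOpt_ne_req hEO
    simp only [optStep]
    rw [Function.update_of_ne (Ne.symm hps), hc₂]

/-- Inversion: where can a charge present at time `T+1` come from. -/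
theorem chg_succ_inv {T : ℕ} {p x : Page} (h : R.chg (T + 1) p = some x) :
    (R.evOpt T = some p ∧ x = p) ∨
    (R.evOpt T ≠ some p ∧ R.evA T = some p ∧
      ((x = p ∧ p ∉ R.cacheOpt (T + 1)) ∨
        (p ∈ R.cacheOpt (T + 1) ∧ x ∈ R.cacheA T ∧ x ∉ R.cacheOpt (T + 1) ∧
          ∀ y ∈ R.cacheOpt (T + 1), y ∉ R.cacheA T →
            clearStep (R.req T) (R.chg T) y ≠ some x))) ∨
    (R.evOpt T ≠ some p ∧ R.evA T ≠ some p ∧ R.chg T p = some x ∧ p ≠ R.req T ∧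
      x ≠ R.req T) := by
  obtain ⟨c₂, hA, hO⟩ := R.chg_step T
  rw [hO] at h
  by_cases hEO : R.evOpt T = some p
  · left
    refine ⟨hEO, ?_⟩
    rw [hEO] at h; simp only [optStep, Function.update_self] at h
    exact (Option.some.inj h).symm
  · have hc₂ : c₂ p = some x := by
      cases hEO' : R.evOpt T with
      | none => rw [hEO'] at h; simpa [optStep] using h
      | some p' =>
        rw [hEO'] at h; simp only [optStep] at h
        rw [Function.update_of_ne] at h
        · exact h
        · rintro rfl; exact hEO hEO'
    by_cases hEA : R.evA T = some p
    · right; left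
      refine ⟨hEO, hEA, ?_⟩
      rw [hEA] at hA
      rcases hA with ⟨h1, h2⟩ | ⟨h1, q, hq1, hq2, hq3, h2⟩
      · rw [h2, Function.update_self] at hc₂
        exact Or.inl ⟨(Option.some.inj hc₂).symm, h1⟩
      · rw [h2, Function.update_self] at hc₂
        cases Option.some.inj hc₂
        exact Or.inr ⟨h1, hq1, hq2, hq3⟩
    · right; right
      have hcl : clearStep (R.req T) (R.chg T) p = some x := by
        cases hEA' : R.evA T with
        | none => rw [hEA'] at hA; simp only [AStep] at hA; rw [hA] at hc₂; exact hc₂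
        | some p' =>
          rw [hEA'] at hA
          have hpp' : p ≠ p' := by rintro rfl; exact hEA hEA'
          rcases hA with ⟨_, h2⟩ | ⟨_, q, _, _, _, h2⟩ <;>
            { rw [h2, Function.update_of_ne hpp'] at hc₂; exact hc₂ }
      simp only [clearStep] at hcl
      by_cases hif : p = R.req T ∨ R.chg T p = some (R.req T)
      · rw [if_pos hif] at hcl; cases hcl
      · rw [if_neg hif] at hcl
        push_neg at hif
        refine ⟨hEO, hEA, hcl, hif.1, ?_⟩
        rintro rfl; exact hif.2 hcl

/-- A charge untouched at step `T` survives. -/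
theorem chg_succ_keep {T : ℕ} {p x : Page} (hp : p ≠ R.req T) (hx : x ≠ R.req T)
    (h : R.chg T p = some x) (hA : R.evA T ≠ some p) (hO : R.evOpt T ≠ some p) :
    R.chg (T + 1) p = some x := by
  obtain ⟨c₂, hAs, hOs⟩ := R.chg_step T
  have hcl : clearStep (R.req T) (R.chg T) p = some x := by
    simp only [clearStep]
    rw [if_neg, h]
    push_neg
    exact ⟨hp, by rw [h]; exact fun hc => hx (Option.some.inj hc)⟩
  have hc₂ : c₂ p = some x := by
    cases hEA : R.evA T with
    | none => rw [hEA] at hAs; simp only [AStep] at hAs; rw [hAs]; exact hcl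
    | some p' =>
      rw [hEA] at hAs
      have hpp' : p ≠ p' := by rintro rfl; exact hA hEA
      rcases hAs with ⟨_, h2⟩ | ⟨_, q, _, _, _, h2⟩ <;>
        { rw [h2, Function.update_of_ne hpp']; exact hcl }
  rw [hOs]
  cases hEO : R.evOpt T with
  | none => simpa [optStep] using hc₂
  | some p' =>
    have hpp' : p ≠ p' := by rintro rfl; exact hO hEO
    simp only [optStep]
    rw [Function.update_of_ne hpp']; exact hc₂

theorem chg_succ_opt {T : ℕ} {p : Page} (h : R.evOpt T = some p) :
    R.chg (T + 1) p = some p := by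
  obtain ⟨c₂, _, hOs⟩ := R.chg_step T
  rw [hOs, h]
  simp [optStep]

/-- The invariants of the charging scheme. -/
structure Inv (R : ChargingRun Page) (t : ℕ) : Prop where
  notOpt : ∀ {p x : Page}, R.chg t p = some x → x ∉ R.cacheOpt t
  memOpt : ∀ {p x : Page}, R.chg t p = some x → p ≠ x → p ∈ R.cacheOpt t
  notA : ∀ {p x : Page}, R.chg t p = some x → p ≠ x → p ∉ R.cacheA t
  uniq : ∀ {x p q : Page}, R.chg t p = some x → R.chg t q = some x → p ≠ x → q ≠ x → p = q
  cre : ∀ {p x : Page}, R.chg t p = some x → x ∈ R.cacheA 0 ∨ ∃ r < t, R.req r = x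

theorem inv : ∀ t, R.Inv t := by
  intro t
  induction t with
  | zero =>
    constructor <;> intros <;> simp_all [R.chg_init]
  | succ T ih =>
    have hNO : ∀ {p x : Page}, R.chg (T+1) p = some x → x ∉ R.cacheOpt (T+1) := by
      intro p x h
      rcases R.chg_succ_inv h with ⟨hEO, rfl⟩ | ⟨_, hEA, ⟨rfl, h2⟩ | ⟨_, _, h3, _⟩⟩ |
          ⟨_, _, hold, _, hx⟩
      · exact (R.stepOpt T).not_mem_evicted hEO
      · exact h2
      · exact h3
      · intro hmem
        rcases (R.stepOpt T).mem_succ hmem with rfl | hmem'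
        · exact hx rfl
        · exact ih.notOpt hold hmem'
    have hMO : ∀ {p x : Page}, R.chg (T+1) p = some x → p ≠ x → p ∈ R.cacheOpt (T+1) := by
      intro p x h hpx
      rcases R.chg_succ_inv h with ⟨hEO, rfl⟩ | ⟨_, hEA, ⟨rfl, h2⟩ | ⟨h1, _⟩⟩ |
          ⟨hO, hA, hold, hp, _⟩
      · exact absurd rfl hpx
      · exact absurd rfl hpx
      · exact h1
      · exact (R.stepOpt T).stay (ih.memOpt hold hpx) hO
    have hNA : ∀ {p x : Page}, R.chg (T+1) p = some x → p ≠ x → p ∉ R.cacheA (T+1) := by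
      intro p x h hpx
      rcases R.chg_succ_inv h with ⟨hEO, rfl⟩ | ⟨_, hEA, ⟨rfl, _⟩ | _⟩ |
          ⟨_, _, hold, hp, _⟩
      · exact absurd rfl hpx
      · exact absurd rfl hpx
      · exact (R.stepA T).not_mem_evicted ‹R.evA T = some p›
      · intro hmem
        rcases (R.stepA T).mem_succ hmem with rfl | hmem'
        · exact hp rfl
        · exact ih.notA hold hpx hmem'
    refine ⟨hNO, hMO, hNA, ?_, ?_⟩
    · -- uniqueness of non-self charges
      intro x p q hp hq hpx hqx
      -- helper: a kept non-self charge contradicts a fresh branch-2 charge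
      have key : ∀ {a b : Page}, R.chg (T+1) a = some x → a ≠ x →
          R.evOpt T ≠ some b → R.evA T = some b →
          b ∈ R.cacheOpt (T+1) → x ∈ R.cacheA T → x ∉ R.cacheOpt (T+1) →
          (∀ y ∈ R.cacheOpt (T+1), y ∉ R.cacheA T →
            clearStep (R.req T) (R.chg T) y ≠ some x) → a = b := by
        intro a b ha hax hOb hAb hbmem hxA hxO hcond
        by_contra hab
        rcases R.chg_succ_inv ha with ⟨hEO, rfl⟩ | ⟨_, hEA, ⟨rfl, _⟩ | ⟨h1, _, _, _⟩⟩ |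
            ⟨hO, hA, hold, hpne, hxne⟩
        · exact hax rfl
        · exact hax rfl
        · exact hab (Option.some.inj (hEA ▸ hAb.symm ▸ rfl : (some a : Option Page) = some b))
        · -- kept old charge; contradicts freshness condition
          have haO : a ∈ R.cacheOpt (T+1) :=
            (R.stepOpt T).stay (ih.memOpt hold hax) hO
          have haA : a ∉ R.cacheA T := ih.notA hold hax
          refine hcond a haO haA ?_
          simp only [clearStep]
          rw [if_neg, hold]
          push_neg
          refine ⟨hpne, ?_⟩
          rw [hold]
          exact fun hc => hxne (Option.some.inj hc)
      rcases R.chg_succ_inv hp with ⟨_, rfl⟩ | ⟨hOp, hAp, ⟨rfl, _⟩ | ⟨h1p, h2p, h3p, h4p⟩⟩ |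
          ⟨hOq', hAq', holdp, hpp, hxp⟩
      · exact absurd rfl hpx
      · exact absurd rfl hpx
      · exact (key hq hqx hOp hAp h1p h2p h3p h4p).symm
      · rcases R.chg_succ_inv hq with ⟨_, rfl⟩ | ⟨hOq, hAq, ⟨rfl, _⟩ | ⟨h1q, h2q, h3q, h4q⟩⟩ |
            ⟨_, _, holdq, _, _⟩
        · exact absurd rfl hqx
        · exact absurd rfl hqx
        · exact key hp hpx hOq hAq h1q h2q h3q h4q
        · exact ih.uniq holdp holdq hpx hqx
    · -- provenance of charge targets
      intro p x h
      have widen : x ∈ R.cacheA 0 ∨ (∃ r < T, R.req r = x) →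
          x ∈ R.cacheA 0 ∨ ∃ r < T + 1, R.req r = x := by
        rintro (h' | ⟨r, hr, h'⟩)
        · exact Or.inl h'
        · exact Or.inr ⟨r, hr.trans (Nat.lt_succ_self T), h'⟩
      rcases R.chg_succ_inv h with ⟨hEO, rfl⟩ | ⟨_, hEA, ⟨rfl, _⟩ | ⟨_, h2, _⟩⟩ |
          ⟨_, _, hold, _, _⟩
      · exact widen (R.mem_cacheOpt_src ((R.stepOpt T).mem_of_ev hEO))
      · exact widen (R.mem_cacheA_src ((R.stepA T).mem_of_ev hEA))
      · exact widen (R.mem_cacheA_src h2)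
      · exact widen (ih.cre hold)

/-- If OPT evicted `s` at `t'`, never again before `t`, and `s` is still outside
OPT's cache at `t`, then `s` carries a self-charge at `t`. -/
theorem chg_self_of_opt_evict {s : Page} {t' t : ℕ} (hev : R.evOpt t' = some s)
    (ht : t' < t) (hmax : ∀ r, t' < r → r < t → R.evOpt r ≠ some s)
    (hout : s ∉ R.cacheOpt t) : R.chg t s = some s := by
  -- s is not requested in (t', t)
  have hreq : ∀ r, t' < r → r < t → R.req r ≠ s := by
    intro r h1 h2 hr
    have hmem : s ∈ R.cacheOpt (r+1) := hr ▸ (R.stepOpt r).req_mem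
    obtain ⟨r'', h1'', h2'', h3''⟩ := R.opt_evicted_of_leave (Nat.succ_le_of_lt h2) hmem hout
    exact hmax r'' (lt_of_lt_of_le (Nat.lt_succ_of_lt h1) h1'') h2'' h3''
  -- induction from t'+1 to t
  have main : ∀ r, t' + 1 ≤ r → r ≤ t → R.chg r s = some s ∧ s ∉ R.cacheOpt r := by
    intro r hr1
    induction r, hr1 using Nat.le_induction with
    | base =>
      intro _
      exact ⟨R.chg_succ_opt hev, (R.stepOpt t').not_mem_evicted hev⟩
    | succ r hr ih =>
      intro hrt
      obtain ⟨hchg, hmem⟩ := ih (le_of_lt hrt)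
      have hreqr : R.req r ≠ s := fun h =>
        hreq r (Nat.lt_of_succ_le hr) (Nat.lt_of_succ_le hrt) h
      have hEOr : R.evOpt r ≠ some s := by
        intro h; exact hmem ((R.stepOpt r).mem_of_ev h)
      have hmem' : s ∉ R.cacheOpt (r+1) := by
        intro h
        rcases (R.stepOpt r).mem_succ h with h' | h'
        · exact hreqr h'.symm
        · exact hmem h'
      refine ⟨?_, hmem'⟩
      by_cases hEA : R.evA r = some s
      · -- A evicts s; since s ∉ CO(r+1), branch 1 applies: self charge
        obtain ⟨c₂, hAs, hOs⟩ := R.chg_step r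
        rw [hEA] at hAs
        have hc₂ : c₂ s = some s := by
          rcases hAs with ⟨_, h2⟩ | ⟨h1, _⟩
          · rw [h2, Function.update_self]
          · exact absurd h1 hmem'
        rw [hOs]
        cases hEO' : R.evOpt r with
        | none => simpa [optStep] using hc₂
        | some p' =>
          have : s ≠ p' := by rintro rfl; exact hEOr hEO'
          simp only [optStep]
          rw [Function.update_of_ne this]; exact hc₂
      · exact R.chg_succ_keep (fun h => hreqr h.symm) (fun h => hreqr h.symm) hchg hEA hEOr
  exact (main t (Nat.succ_le_of_lt ht) le_rfl).1

theorem Ucount_eq_zero (T : ℕ) : Ucount R T = 0 := by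
  rw [Ucount, Finset.card_eq_zero, Finset.filter_eq_empty_iff]
  rintro t _ ⟨hout, ⟨t', ht', hev⟩, hbear⟩
  -- choose the last eviction of s before t
  set s := R.req t with hs
  have hne : ((range t).filter fun r => R.evOpt r = some s).Nonempty :=
    ⟨t', by simp [Finset.mem_filter, Finset.mem_range, ht', hev]⟩
  set t₀ := (((range t).filter fun r => R.evOpt r = some s).max' hne) with ht₀
  have ht₀mem := Finset.max'_mem _ hne
  rw [Finset.mem_filter, Finset.mem_range] at ht₀mem
  have hmax : ∀ r, t₀ < r → r < t → R.evOpt r ≠ some s := by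
    intro r h1 h2 hr
    have : r ≤ t₀ := Finset.le_max' _ r (by simp [Finset.mem_filter, Finset.mem_range, h2, hr])
    omega
  have hself := R.chg_self_of_opt_evict ht₀mem.2 ht₀mem.1 hmax hout
  have : s ∈ bearers R t s := by
    rw [bearers, Finset.mem_filter]
    exact ⟨Finset.mem_univ _, hself⟩
  rw [hbear] at this
  exact absurd this (Finset.notMem_empty _)

/-- `x` is requested (weakly) after `T`, no later than the first request to `p`
(weakly) after `T`. -/
def Wk (R : ChargingRun Page) (T : ℕ) (p x : Page) : Prop :=
  ∃ m, T ≤ m ∧ R.req m = x ∧ ∀ j, T ≤ j → j < m → R.req j ≠ p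

/-- A charge `p → x` is good at time `T` if `x` is requested no later than the next
request to `p`, or `p` is never requested again. -/
def GoodChg (R : ChargingRun Page) (T : ℕ) (p x : Page) : Prop :=
  Wk R T p x ∨ ∀ m, T ≤ m → R.req m ≠ p

/-- A self-charge is always good. -/
theorem goodChg_self (T : ℕ) (p : Page) : GoodChg R T p p := by
  by_cases h : ∃ m, T ≤ m ∧ R.req m = p
  · left
    classical
    refine ⟨Nat.find h, (Nat.find_spec h).1, (Nat.find_spec h).2, ?_⟩
    intro j hj1 hj2 hjp
    exact Nat.find_min h (by omega) ⟨hj1, hjp⟩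
  · right
    push_neg at h
    exact h

theorem goodChg_shift {T : ℕ} {p x : Page} (hp : p ≠ R.req T) (hx : x ≠ R.req T)
    (h : GoodChg R T p x) : GoodChg R (T + 1) p x := by
  rcases h with ⟨m, hm1, hm2, hm3⟩ | h
  · left
    have hmT : T + 1 ≤ m := by
      rcases Nat.lt_or_ge T m with h' | h'
      · omega
      · exfalso
        have hmt : m = T := by omega
        subst hmt
        exact hx hm2.symm
    exact ⟨m, hmT, hm2, fun j hj1 hj2 => hm3 j (by omega) hj2⟩
  · right
    intro m hm
    exact h m (by omega)

/-- The set of pages outside `A`'s cache giving a good charge. -/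
noncomputable def Vset (R : ChargingRun Page) (T : ℕ) : Finset Page :=
  univ.filter fun p => p ∉ R.cacheA T ∧ ∃ x, R.chg T p = some x ∧ GoodChg R T p x

theorem Vset_card_le_Ocount (T : ℕ) : (Vset R T).card ≤ Ocount R T := by
  rw [Ocount]
  apply Finset.card_le_card
  intro p hp
  rw [Vset, Finset.mem_filter] at hp
  obtain ⟨_, h1, x, h2, _⟩ := hp
  rw [Finset.mem_filter]
  exact ⟨Finset.mem_univ _, h1, by rw [h2]; exact Option.some_ne_none x⟩

theorem beta_gain {T : ℕ} (h : Beta R T) :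
    ∃ p, R.evA T = some p ∧ p ∈ Vset R (T + 1) ∧ p ∉ Vset R T := by
  obtain ⟨p, u, hev, hchg, m, hm1, hm2, hm3⟩ := h
  refine ⟨p, hev, ?_, ?_⟩
  · rw [Vset, Finset.mem_filter]
    refine ⟨Finset.mem_univ _, (R.stepA T).not_mem_evicted hev, u, hchg, ?_⟩
    left
    refine ⟨m, hm1, hm2, ?_⟩
    intro j hj1 hj2 hjp
    have hle : nextReq R T p ≤ (j : ℕ∞) := by
      apply iInf₂_le j
      exact ⟨by omega, hjp⟩
    have : (m : ℕ∞) ≤ (j : ℕ∞) := le_trans hm3 hle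
    rw [Nat.cast_le] at this
    omega
  · rw [Vset, Finset.mem_filter]
    push_neg
    intro _ hmem
    exact absurd ((R.stepA T).mem_of_ev hev) hmem

/-- Pages leaving `Vset` at a step: only the requested page and its bearers. -/
theorem loss_subset (T : ℕ) : Vset R T \ Vset R (T + 1) ⊆
    insert (R.req T) ((bearers R T (R.req T)).erase (R.req T)) := by
  intro p hp
  rw [Finset.mem_sdiff] at hp
  obtain ⟨hpV, hpV'⟩ := hp
  rw [Vset, Finset.mem_filter] at hpV
  obtain ⟨_, hpA, x, hchg, hgood⟩ := hpV
  by_cases hps : p = R.req T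
  · rw [hps]; exact Finset.mem_insert_self _ _
  · rw [Finset.mem_insert]
    right
    rw [Finset.mem_erase, bearers, Finset.mem_filter]
    refine ⟨hps, Finset.mem_univ _, ?_⟩
    rw [hchg]
    by_contra hxs
    have hxs' : x ≠ R.req T := fun h => hxs (by rw [h])
    exfalso
    apply hpV'
    rw [Vset, Finset.mem_filter]
    have hpA' : p ∉ R.cacheA (T + 1) := by
      intro h
      rcases (R.stepA T).mem_succ h with h' | h'
      · exact hps h'
      · exact hpA h'
    refine ⟨Finset.mem_univ _, hpA', ?_⟩
    by_cases hEO : R.evOpt T = some p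
    · exact ⟨p, R.chg_succ_opt hEO, R.goodChg_self _ _⟩
    · have hEA : R.evA T ≠ some p := by
        intro h; exact hpA ((R.stepA T).mem_of_ev h)
      exact ⟨x, R.chg_succ_keep hps hxs' hchg hEA hEO,
        R.goodChg_shift hps hxs' hgood⟩

/-- There is at most one non-self bearer. -/
theorem bearers_erase_card_le_one (T : ℕ) (x : Page) :
    ((bearers R T x).erase x).card ≤ 1 := by
  rw [Finset.card_le_one]
  intro a ha b hb
  rw [Finset.mem_erase, bearers, Finset.mem_filter] at ha hb
  exact (R.inv T).uniq ha.2.2 hb.2.2 ha.1 hb.1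

theorem costOpt_succ (T : ℕ) : costOpt R (T + 1) =
    costOpt R T + (if R.req T ∉ R.cacheOpt T then 1 else 0) := by
  rw [costOpt, costOpt, Finset.range_add_one, Finset.filter_insert]
  by_cases h : R.req T ∉ R.cacheOpt T
  · rw [if_pos h, if_pos h, Finset.card_insert_of_notMem (by simp)]
  · rw [if_neg h, if_neg h, Nat.add_zero]

theorem Dcount_succ (T : ℕ) : Dcount R (T + 1) =
    Dcount R T + (if (bearers R T (R.req T)).card = 2 then 1 else 0) := by
  rw [Dcount, Dcount, Finset.range_add_one, Finset.filter_insert]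
  by_cases h : (bearers R T (R.req T)).card = 2
  · rw [if_pos h, if_pos h, Finset.card_insert_of_notMem (by simp)]
  · rw [if_neg h, if_neg h, Nat.add_zero]

theorem Icount_succ (T : ℕ) : (Icount R (T + 1) : ℤ) = (Icount R T : ℤ) +
    (if R.req T ∉ R.cacheA 0 ∧ ∀ r < T, R.req r ≠ R.req T then 1 else 0) := by
  have himg : (range (T + 1)).image R.req = insert (R.req T) ((range T).image R.req) := by
    rw [Finset.range_add_one, Finset.image_insert]
  rw [Icount, Icount, himg]
  by_cases h0 : R.req T ∈ R.cacheA 0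
  · have heq : insert (R.req T) ((range T).image R.req) \ R.cacheA 0
        = ((range T).image R.req) \ R.cacheA 0 := by
      ext y
      simp only [Finset.mem_sdiff, Finset.mem_insert]
      constructor
      · rintro ⟨rfl | hy, hy0⟩
        · exact absurd h0 hy0
        · exact ⟨hy, hy0⟩
      · rintro ⟨hy, hy0⟩
        exact ⟨Or.inr hy, hy0⟩
    rw [heq, if_neg (by tauto)]
    push_cast; ring
  · have heq : insert (R.req T) ((range T).image R.req) \ R.cacheA 0
        = insert (R.req T) (((range T).image R.req) \ R.cacheA 0) := by
      ext y
      simp only [Finset.mem_sdiff, Finset.mem_insert]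
      constructor
      · rintro ⟨rfl | hy, hy0⟩
        · exact Or.inl rfl
        · exact Or.inr ⟨hy, hy0⟩
      · rintro (rfl | ⟨hy, hy0⟩)
        · exact ⟨Or.inl rfl, h0⟩
        · exact ⟨Or.inr hy, hy0⟩
    rw [heq]
    by_cases hA : R.req T ∈ ((range T).image R.req) \ R.cacheA 0
    · rw [Finset.insert_eq_self.mpr hA, if_neg]
      · push_cast; ring
      · rw [Finset.mem_sdiff, Finset.mem_image] at hA
        obtain ⟨⟨r, hr, hrs⟩, _⟩ := hA
        push_neg
        intro _
        exact ⟨r, Finset.mem_range.1 hr, hrs⟩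
    · rw [Finset.card_insert_of_notMem hA, if_pos]
      · push_cast; ring
      · refine ⟨h0, ?_⟩
        intro r hr hrs
        exact hA (Finset.mem_sdiff.2 ⟨Finset.mem_image.2 ⟨r, Finset.mem_range.2 hr, hrs⟩, h0⟩)

/-- The requested page, if it gives a good charge, gives it to itself. -/
theorem req_mem_Vset_self {T : ℕ} (h : R.req T ∈ Vset R T) :
    R.chg T (R.req T) = some (R.req T) := by
  rw [Vset, Finset.mem_filter] at h
  obtain ⟨_, _, x, hchg, hgood⟩ := h
  rcases hgood with ⟨m, hm1, hm2, hm3⟩ | hnever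
  · rcases Nat.lt_or_ge T m with hlt | hge
    · exact absurd rfl (hm3 T le_rfl hlt)
    · have : m = T := by omega
      subst this
      rw [hchg, hm2]
  · exact absurd rfl (hnever T le_rfl)

/-- The key per-step inequality. -/
theorem keyStep (T : ℕ) :
    (if Beta R T then (1 : ℤ) else 0)
      + ((Icount R (T + 1) : ℤ) - (Icount R T : ℤ))
      - ((Dcount R (T + 1) : ℤ) - (Dcount R T : ℤ))
      - (((Vset R (T + 1)).card : ℤ) - ((Vset R T).card : ℤ))
      ≤ (costOpt R (T + 1) : ℤ) - (costOpt R T : ℤ) := by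
  classical
  set s := R.req T with hs
  set L := Vset R T \ Vset R (T + 1) with hL
  -- the gain inequality
  have hv : ((Vset R T).card : ℤ) + (if Beta R T then (1 : ℤ) else 0)
      ≤ ((Vset R (T + 1)).card : ℤ) + (L.card : ℤ) := by
    have hsplit : (Vset R T ∩ Vset R (T + 1)).card + L.card = (Vset R T).card :=
      Finset.card_inter_add_card_sdiff _ _
    split_ifs with hb
    · obtain ⟨p, hev, hp1, hp2⟩ := R.beta_gain hb
      have hsub : insert p (Vset R T ∩ Vset R (T + 1)) ⊆ Vset R (T + 1) := by
        intro y hy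
        rcases Finset.mem_insert.1 hy with rfl | hy'
        · exact hp1
        · exact (Finset.mem_inter.1 hy').2
      have hcard := Finset.card_le_card hsub
      rw [Finset.card_insert_of_notMem (fun h => hp2 (Finset.mem_inter.1 h).1)] at hcard
      push_cast
      omega
    · have hcard := Finset.card_le_card
        (Finset.inter_subset_right (s₁ := Vset R T) (s₂ := Vset R (T + 1)))
      push_cast
      omega
  -- loss bounds
  have hLsub := R.loss_subset T
  rw [← hL, ← hs] at hLsub
  have hnl2 : L.card ≤ 2 := by
    calc L.card ≤ (insert s ((bearers R T s).erase s)).card := Finset.card_le_card hLsub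
    _ ≤ ((bearers R T s).erase s).card + 1 := Finset.card_insert_le _ _
    _ ≤ 2 := by have := R.bearers_erase_card_le_one T s; omega
  have hM_of_loss : L.Nonempty → s ∉ R.cacheOpt T := by
    rintro ⟨p, hp⟩
    have hpV : p ∈ Vset R T := (Finset.mem_sdiff.1 hp).1
    rcases Finset.mem_insert.1 (hLsub hp) with rfl | hpe
    · have := R.req_mem_Vset_self (T := T) (by rw [← hs]; exact hpV)
      exact (R.inv T).notOpt this
    · rw [Finset.mem_erase, bearers, Finset.mem_filter] at hpe
      exact (R.inv T).notOpt hpe.2.2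
  have hD_of_two : L.card = 2 → (bearers R T s).card = 2 := by
    intro h2
    have hLe : L = insert s ((bearers R T s).erase s) := by
      apply Finset.eq_of_subset_of_card_le hLsub
      calc (insert s ((bearers R T s).erase s)).card
          ≤ ((bearers R T s).erase s).card + 1 := Finset.card_insert_le _ _
        _ ≤ 2 := by have := R.bearers_erase_card_le_one T s; omega
        _ = L.card := h2.symm
    have hsL : s ∈ L := hLe ▸ Finset.mem_insert_self _ _
    have hsV : s ∈ Vset R T := (Finset.mem_sdiff.1 hsL).1
    have hself := R.req_mem_Vset_self (T := T) (by rw [← hs]; exact hsV)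
    have hsb : s ∈ bearers R T s := by
      rw [bearers, Finset.mem_filter]; exact ⟨Finset.mem_univ _, hself⟩
    have hcard := Finset.card_erase_add_one hsb
    have hE1 : ((bearers R T s).erase s).card = 1 := by
      have hEL : ((bearers R T s).erase s).card + 1 = L.card := by
        rw [hLe, Finset.card_insert_of_notMem (Finset.notMem_erase _ _)]
      omega
    omega
  have hNew_zero : (s ∉ R.cacheA 0 ∧ ∀ r < T, R.req r ≠ s) →
      s ∉ R.cacheOpt T ∧ L.card = 0 := by
    rintro ⟨h0, hprev⟩
    constructor
    · intro hmem
      rcases R.mem_cacheOpt_src hmem with h | ⟨r, hr, h⟩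
      · exact h0 h
      · exact hprev r hr h
    · rw [Finset.card_eq_zero, Finset.eq_empty_iff_forall_notMem]
      intro p hp
      have hchgs : R.chg T p = some s ∨ R.chg T s = some s := by
        rcases Finset.mem_insert.1 (hLsub hp) with rfl | hpe
        · exact Or.inr (R.req_mem_Vset_self (T := T)
            (by rw [← hs]; exact (Finset.mem_sdiff.1 hp).1))
        · rw [Finset.mem_erase, bearers, Finset.mem_filter] at hpe
          exact Or.inl hpe.2.2
      rcases hchgs with h | h <;>
      · rcases (R.inv T).cre h with h' | ⟨r, hr, h'⟩
        · exact h0 h'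
        · exact hprev r hr h'
  -- assemble
  rw [R.Icount_succ, R.Dcount_succ, R.costOpt_succ]
  push_cast
  rw [← hs]
  set bI := (if Beta R T then (1 : ℤ) else 0) with hbI
  set dI := (if (bearers R T s).card = 2 then (1 : ℤ) else 0) with hdI
  set mI := (if s ∉ R.cacheOpt T then (1 : ℤ) else 0) with hmI
  set iI := (if (s ∉ R.cacheA 0 ∧ ∀ r < T, R.req r ≠ s) then (1 : ℤ) else 0) with hiI
  have hbI01 : 0 ≤ bI ∧ bI ≤ 1 := by rw [hbI]; split_ifs <;> omega
  have hdI01 : 0 ≤ dI ∧ dI ≤ 1 := by rw [hdI]; split_ifs <;> omega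
  have hmI01 : 0 ≤ mI ∧ mI ≤ 1 := by rw [hmI]; split_ifs <;> omega
  have hiI01 : 0 ≤ iI ∧ iI ≤ 1 := by rw [hiI]; split_ifs <;> omega
  have h2 : ((L.card : ℤ)) ≤ 2 := by exact_mod_cast hnl2
  have h3' : ((L.card : ℤ)) = 0 ∨ mI = 1 := by
    by_cases hc : L.card = 0
    · exact Or.inl (by exact_mod_cast hc)
    · refine Or.inr ?_
      rw [hmI, if_pos (hM_of_loss (Finset.card_pos.1 (Nat.pos_of_ne_zero hc)))]
  have h4' : ((L.card : ℤ)) ≤ 1 ∨ dI = 1 := by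
    by_cases hc : L.card = 2
    · exact Or.inr (by rw [hdI, if_pos (hD_of_two hc)])
    · refine Or.inl ?_
      have : L.card ≤ 1 := by omega
      exact_mod_cast this
  have h5' : iI = 0 ∨ (mI = 1 ∧ ((L.card : ℤ)) = 0) := by
    by_cases hNew : s ∉ R.cacheA 0 ∧ ∀ r < T, R.req r ≠ s
    · obtain ⟨hM, hL0⟩ := hNew_zero hNew
      exact Or.inr ⟨by rw [hmI, if_pos hM], by exact_mod_cast hL0⟩
    · exact Or.inl (by rw [hiI, if_neg hNew])
  rcases h3' with h3 | h3 <;> rcases h4' with h4 | h4 <;>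
    rcases h5' with h5 | ⟨h5, h5'⟩ <;> omega

/-- The strengthened horizon inequality. -/
theorem main_aux : ∀ T : ℕ,
    (∑ t ∈ range T, (if Beta R t then (1 : ℤ) else 0)) + (Icount R T : ℤ)
      - (Dcount R T : ℤ) - ((Vset R T).card : ℤ) ≤ (costOpt R T : ℤ) := by
  intro T
  induction T with
  | zero =>
    simp only [Finset.range_zero, Finset.sum_empty, Icount, Dcount, costOpt]
    simp only [Finset.range_zero, Finset.image_empty, Finset.empty_sdiff,
      Finset.filter_empty, Finset.card_empty, Nat.cast_zero]
    have : (0 : ℤ) ≤ ((Vset R 0).card : ℤ) := by positivity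
    omega
  | succ T ih =>
    rw [Finset.sum_range_succ]
    have := R.keyStep T
    omega

end ChargingRun
/-- **Lemma (accounting of `OPT`'s misses).**  Under the updated charging scheme, for
every request sequence, every pair of runs of `A` and `OPT` and every horizon `T`,
`cost(OPT, T) ≥ Σ_{t < T} β(t) + ℐ − 𝒟 − 𝒪 + 𝒰`, the counts being evaluated at
horizon `T`. -/
theorem costOpt_ge_beta_add_phi (R : ChargingRun Page) (T : ℕ) :
    (∑ t ∈ range T, (if Beta R t then (1 : ℤ) else 0)) + Phi R T ≤ (costOpt R T : ℤ) := by
  have h1 := R.main_aux T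
  have h2 : ((ChargingRun.Vset R T).card : ℤ) ≤ (Ocount R T : ℤ) := by
    exact_mod_cast R.Vset_card_le_Ocount T
  have h3 : (Ucount R T : ℤ) = 0 := by
    rw [R.Ucount_eq_zero]; rfl
  rw [Phi]
  omega
end
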